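/- arXiv:0808.2521 — 4 statements merged into one kernel-verified Lean document; each statement's English description precedes it below -/
import Mathlib

section
/- For any two Hermitian matrices A and B of order k, the Kolmogorov (sup-norm) distance between their empirical spectral distribution functions satisfies ||F_A - F_B||_∞ ≤ rank(A - B)/k. -/
open scoped Classical
open Matrix Finset

section helpers

variable {k : ℕ}

local notation "V" => EuclideanSpace ℂ (Fin k)

lemma repr_linmap (b : OrthonormalBasis (Fin k) ℂ V) (L : V →ₗ[ℂ] V) (μ : Fin k → ℝ)
    (hL : ∀ i, L (b i) = (μ i : ℂ) • b i) (v : V) (i : Fin k) :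
    b.repr (L v) i = (μ i : ℂ) * b.repr v i := by
  conv_lhs => rw [← b.sum_repr v]
  rw [map_sum]
  simp only [_root_.map_smul, hL]
  rw [map_sum]
  simp only [_root_.map_smul, b.repr_self]
  classical
  rw [WithLp.ofLp_sum, Fintype.sum_apply]
  simp [EuclideanSpace.single_apply, mul_comm]

lemma re_inner_linmap (b : OrthonormalBasis (Fin k) ℂ V) (L : V →ₗ[ℂ] V) (μ : Fin k → ℝ)
    (hL : ∀ i, L (b i) = (μ i : ℂ) • b i) (v : V) :
    (inner ℂ v (L v) : ℂ).re = ∑ i, μ i * Complex.normSq (b.repr v i) := by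
  rw [← b.repr.inner_map_map v (L v)]
  rw [PiLp.inner_apply]
  have : ∀ i : Fin k, (starRingEnd ℂ) (b.repr v i) * b.repr (L v) i
      = ((μ i * Complex.normSq (b.repr v i) : ℝ) : ℂ) := by
    intro i
    rw [repr_linmap b L μ hL v i]
    push_cast
    rw [Complex.normSq_eq_conj_mul_self]
    ring
  simp only [RCLike.inner_apply', this]
  rw [← Complex.ofReal_sum]
  simp

end helpers

section count

variable {k : ℕ}

lemma matrix_rank_neg (M : Matrix (Fin k) (Fin k) ℂ) : (-M).rank = M.rank := by
  have hneg : (-M).mulVecLin = -(M.mulVecLin) := by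
    ext v i
    simp [Matrix.mulVecLin, Matrix.neg_mulVec]
  have h : LinearMap.range (-M).mulVecLin = LinearMap.range M.mulVecLin := by
    rw [hneg, LinearMap.range_neg]
  unfold Matrix.rank
  rw [h]

set_option maxHeartbeats 2000000 in
lemma count_le (A B : Matrix (Fin k) (Fin k) ℂ) (hA : A.IsHermitian) (hB : B.IsHermitian)
    (x : ℝ) :
    (Finset.univ.filter fun i => hA.eigenvalues i ≤ x).card ≤
      (Finset.univ.filter fun i => hB.eigenvalues i ≤ x).card + (A - B).rank := by
  classical
  set V := EuclideanSpace ℂ (Fin k)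
  set bA := hA.eigenvectorBasis with hbA
  set bB := hB.eigenvectorBasis with hbB
  set LA := Matrix.toEuclideanLin A with hLAdef
  set LB := Matrix.toEuclideanLin B with hLBdef
  have hLA : ∀ i, LA (bA i) = ((hA.eigenvalues i : ℝ) : ℂ) • bA i := by
    intro i
    have h := hA.mulVec_eigenvectorBasis i
    apply (WithLp.equiv 2 (Fin k → ℂ)).injective
    funext j
    have := congrFun h j
    simpa [hLAdef, hLBdef, hbA, hbB, Matrix.toEuclideanLin_apply, Complex.real_smul] using this
  have hLB : ∀ i, LB (bB i) = ((hB.eigenvalues i : ℝ) : ℂ) • bB i := by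
    intro i
    have h := hB.mulVec_eigenvectorBasis i
    apply (WithLp.equiv 2 (Fin k → ℂ)).injective
    funext j
    have := congrFun h j
    simpa [hLAdef, hLBdef, hbA, hbB, Matrix.toEuclideanLin_apply, Complex.real_smul] using this
  set sA : Finset (Fin k) := Finset.univ.filter (fun i => hA.eigenvalues i ≤ x) with hsA
  set sB : Finset (Fin k) := Finset.univ.filter (fun i => x < hB.eigenvalues i) with hsB
  set S : Submodule ℂ V := Submodule.span ℂ (⇑bA '' ↑sA) with hS
  set T : Submodule ℂ V := Submodule.span ℂ (⇑bB '' ↑sB) with hT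
  set N : Submodule ℂ V := LinearMap.ker (Matrix.toEuclideanLin (A - B)) with hN
  -- dimensions of spans
  have hrankS : Module.finrank ℂ S = sA.card := by
    have li : LinearIndependent ℂ (fun i : ↥sA => bA i) :=
      (bA.orthonormal.linearIndependent).comp _ Subtype.coe_injective
    have himg : ⇑bA '' ↑sA = Set.range (fun i : ↥sA => bA i) := Set.image_eq_range _ _
    rw [hS, himg, finrank_span_eq_card li, Fintype.card_coe]
  have hrankT : Module.finrank ℂ T = sB.card := by
    have li : LinearIndependent ℂ (fun i : ↥sB => bB i) :=
      (bB.orthonormal.linearIndependent).comp _ Subtype.coe_injective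
    have himg : ⇑bB '' ↑sB = Set.range (fun i : ↥sB => bB i) := Set.image_eq_range _ _
    rw [hT, himg, finrank_span_eq_card li, Fintype.card_coe]
  -- disjointness
  have hdisj : Disjoint (S ⊓ T) N := by
    rw [Submodule.disjoint_def]
    rintro v ⟨hvS, hvT⟩ hvN
    by_contra hv0
    -- coefficients supported in sA resp sB
    have hsuppA : ∀ i, bA.repr v i ≠ 0 → i ∈ sA := by
      intro i hi
      have hv' : v ∈ Submodule.span ℂ (⇑bA.toBasis '' ↑sA) := by
        rwa [bA.coe_toBasis]
      have := (Module.Basis.mem_span_image bA.toBasis).mp hv'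
      apply this
      simp only [Finset.mem_coe, Finsupp.mem_support_iff, bA.coe_toBasis_repr_apply]
      exact hi
    have hsuppB : ∀ i, bB.repr v i ≠ 0 → i ∈ sB := by
      intro i hi
      have hv' : v ∈ Submodule.span ℂ (⇑bB.toBasis '' ↑sB) := by
        rwa [bB.coe_toBasis]
      have := (Module.Basis.mem_span_image bB.toBasis).mp hv'
      apply this
      simp only [Finset.mem_coe, Finsupp.mem_support_iff, bB.coe_toBasis_repr_apply]
      exact hi
    -- equal images
    have hABv : LA v = LB v := by
      have : Matrix.toEuclideanLin (A - B) v = 0 := hvN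
      rw [map_sub] at this
      have := sub_eq_zero.mp (by simpa using this)
      exact this
    -- norms
    have hnormA : ((inner ℂ v v : ℂ)).re = ∑ i, Complex.normSq (bA.repr v i) := by
      have h := re_inner_linmap bA LinearMap.id (fun _ => (1 : ℝ)) (by simp) v
      simpa only [LinearMap.id_apply, one_mul] using h
    have hnormB : ((inner ℂ v v : ℂ)).re = ∑ i, Complex.normSq (bB.repr v i) := by
      have h := re_inner_linmap bB LinearMap.id (fun _ => (1 : ℝ)) (by simp) v
      simpa only [LinearMap.id_apply, one_mul] using h
    have hA_le : ((inner ℂ v (LA v) : ℂ)).re ≤ x * ((inner ℂ v v : ℂ)).re := by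
      rw [re_inner_linmap bA LA hA.eigenvalues hLA v, hnormA, Finset.mul_sum]
      apply Finset.sum_le_sum
      intro i _
      rcases eq_or_ne (bA.repr v i) 0 with h | h
      · simp [h]
      · have := hsuppA i h
        rw [hsA, Finset.mem_filter] at this
        exact mul_le_mul_of_nonneg_right this.2 (Complex.normSq_nonneg _)
    have hB_gt : x * ((inner ℂ v v : ℂ)).re < ((inner ℂ v (LB v) : ℂ)).re := by
      rw [re_inner_linmap bB LB hB.eigenvalues hLB v, hnormB, Finset.mul_sum]
      have hex : ∃ i, bB.repr v i ≠ 0 := by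
        by_contra hc
        push_neg at hc
        apply hv0
        have hz : bB.repr v = 0 := by
          ext i
          exact hc i
        exact bB.repr.injective (by simp [hz])
      obtain ⟨i0, hi0⟩ := hex
      apply Finset.sum_lt_sum
      · intro i _
        rcases eq_or_ne (bB.repr v i) 0 with h | h
        · simp [h]
        · have := hsuppB i h
          rw [hsB, Finset.mem_filter] at this
          exact mul_le_mul_of_nonneg_right this.2.le (Complex.normSq_nonneg _)
      · refine ⟨i0, Finset.mem_univ _, ?_⟩
        have := hsuppB i0 hi0
        rw [hsB, Finset.mem_filter] at this
        exact mul_lt_mul_of_pos_right this.2 (Complex.normSq_pos.mpr hi0)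
    rw [hABv] at hA_le
    exact absurd hA_le (not_le.mpr hB_gt)
  -- dimension counting
  have hfin : Module.finrank ℂ V = k := by
    simp [V, finrank_euclideanSpace_fin]
  have h1 := Submodule.finrank_sup_add_finrank_inf_eq S T
  have h2 : Module.finrank ℂ ↥(S ⊔ T) ≤ k := by
    have h := Submodule.finrank_le (S ⊔ T)
    rwa [hfin] at h
  have h3 : Module.finrank ℂ ↥(S ⊓ T) + Module.finrank ℂ N ≤ k := by
    have h := Submodule.finrank_add_finrank_le_of_disjoint hdisj
    rwa [hfin] at h
  have h4 : (A - B).rank + Module.finrank ℂ N = k := by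
    have hr : (A - B).rank = Module.finrank ℂ (LinearMap.range (Matrix.toEuclideanLin (A - B))) := by
      rw [Matrix.rank_eq_finrank_range_toLin (A - B) (EuclideanSpace.basisFun (Fin k) ℂ).toBasis
        (EuclideanSpace.basisFun (Fin k) ℂ).toBasis, ← Matrix.toEuclideanLin_eq_toLin_orthonormal]
    rw [hr, hN]
    rw [LinearMap.finrank_range_add_finrank_ker]
    exact hfin
  have h5 : sB.card + (Finset.univ.filter fun i => hB.eigenvalues i ≤ x).card = k := by
    have := Finset.card_filter_add_card_filter_not
      (s := (Finset.univ : Finset (Fin k))) (p := fun i => hB.eigenvalues i ≤ x)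
    rw [Finset.card_univ, Fintype.card_fin] at this
    have heq : sB = Finset.univ.filter (fun i => ¬ hB.eigenvalues i ≤ x) := by
      rw [hsB]
      congr 1
      ext i
      simp [not_le]
    rw [heq]
    omega
  omega

end count

/-- Empirical spectral distribution function of a Hermitian matrix. -/
noncomputable def esd {m : Type*} [Fintype m] [DecidableEq m] {A : Matrix m m ℂ}
    (hA : A.IsHermitian) (x : ℝ) : ℝ :=
  ((Finset.univ.filter fun i => hA.eigenvalues i ≤ x).card : ℝ) / Fintype.card m

/-- For any two Hermitian matrices `A, B` of order `k`,
`‖F_A - F_B‖_∞ ≤ rank (A - B) / k`. -/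
theorem sup_dist_esd_le_rank_div {k : ℕ} (hk : 0 < k)
    (A B : Matrix (Fin k) (Fin k) ℂ) (hA : A.IsHermitian) (hB : B.IsHermitian) :
    ⨆ x : ℝ, |esd hA x - esd hB x| ≤ ((A - B).rank : ℝ) / k := by
  refine ciSup_le fun x => ?_
  rw [esd, esd, Fintype.card_fin, div_sub_div_same, abs_div,
    abs_of_nonneg (by positivity : (0:ℝ) ≤ (k:ℝ))]
  gcongr
  rw [abs_sub_le_iff]
  have h1 := count_le A B hA hB x
  have h2 := count_le B A hB hA x
  have hr : (B - A).rank = (A - B).rank := by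
    rw [show B - A = -(A - B) by abel, matrix_rank_neg]
  rw [hr] at h2
  constructor
  · rw [sub_le_iff_le_add, add_comm]
    exact_mod_cast h1
  · rw [sub_le_iff_le_add, add_comm]
    exact_mod_cast h2
end

section
/- Fix x ∈ ℝ, an n×n Hermitian matrix M, 1 ≤ k ≤ n, and a permutation σ of {1,...,n}. Let τ = (I,J) be a random transposition where I, J are independent uniform on {1,...,n}. Define f(π) = F_{A(π)}(x), where A(π) is the k×k principal submatrix of M indexed by π(1),...,π(k). Then E[(f(σ) - f(στ))²] ≤ 8/(kn). -/
open scoped Classical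
open Matrix Finset

/-- `f(p) = F_{A(p)}(x)`: ESD at `x` of the principal submatrix of `M` indexed by
`p 1, …, p k`. -/
noncomputable def fESD {n k : ℕ} (hk : k ≤ n) (M : Matrix (Fin n) (Fin n) ℂ)
    (hM : M.IsHermitian) (p : Equiv.Perm (Fin n)) (x : ℝ) : ℝ :=
  esd (hM.submatrix (fun a : Fin k => p (Fin.castLE hk a))) x

section Spectral

variable {m : Type*} [Fintype m] [DecidableEq m]

/-- Quadratic form of a matrix on Euclidean space. -/
noncomputable def qf (A : Matrix m m ℂ) (v : EuclideanSpace ℂ m) : ℝ :=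
  (inner ℂ v (WithLp.toLp 2 (A.mulVec v) : EuclideanSpace ℂ m) : ℂ).re

/-- Number of eigenvalues `≤ x`. -/
noncomputable def Ncount {A : Matrix m m ℂ} (hA : A.IsHermitian) (x : ℝ) : ℕ :=
  (Finset.univ.filter fun i => hA.eigenvalues i ≤ x).card

theorem esd_eq_Ncount {A : Matrix m m ℂ} (hA : A.IsHermitian) (x : ℝ) :
    esd hA x = (Ncount hA x : ℝ) / Fintype.card m := rfl

theorem qf_eq (A : Matrix m m ℂ) (hA : A.IsHermitian) (v : EuclideanSpace ℂ m) :
    qf A v = ∑ i, hA.eigenvalues i * ‖hA.eigenvectorBasis.repr v i‖ ^ 2 := by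
  set b := hA.eigenvectorBasis with hb
  have hv : (v : EuclideanSpace ℂ m) = ∑ i, b.repr v i • b i := (b.sum_repr v).symm
  have h1 : (WithLp.toLp 2 (A.mulVec v) : EuclideanSpace ℂ m)
      = ∑ i, b.repr v i • ((hA.eigenvalues i : ℂ) • b i) := by
    conv_lhs => rw [hv]
    rw [WithLp.ofLp_sum, ← A.mulVecLin_apply, map_sum, WithLp.toLp_sum]
    refine Finset.sum_congr rfl fun i _ => ?_
    rw [WithLp.ofLp_smul, _root_.map_smul, A.mulVecLin_apply, WithLp.toLp_smul]
    congr 1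
    rw [hA.mulVec_eigenvectorBasis i, WithLp.toLp_smul, WithLp.toLp_ofLp]
    exact RCLike.real_smul_eq_coe_smul (K := ℂ) _ _
  rw [qf, h1, inner_sum]
  rw [Complex.re_sum]
  refine Finset.sum_congr rfl fun i _ => ?_
  rw [inner_smul_right, inner_smul_right]
  have h2 : (inner ℂ v (b i) : ℂ) = (starRingEnd ℂ) (b.repr v i) := by
    rw [b.repr_apply_apply, inner_conj_symm]
  rw [h2]
  have : b.repr v i * ((hA.eigenvalues i : ℂ) * (starRingEnd ℂ) (b.repr v i))
      = (hA.eigenvalues i : ℂ) * (b.repr v i * (starRingEnd ℂ) (b.repr v i)) := by ring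
  rw [this, Complex.mul_conj]
  rw [Complex.normSq_eq_norm_sq, ← Complex.ofReal_mul, Complex.ofReal_re]

theorem norm_sq_eq (A : Matrix m m ℂ) (hA : A.IsHermitian) (v : EuclideanSpace ℂ m) :
    ‖v‖ ^ 2 = ∑ i, ‖hA.eigenvectorBasis.repr v i‖ ^ 2 := by
  rw [← hA.eigenvectorBasis.repr.norm_map v, EuclideanSpace.norm_eq,
    Real.sq_sqrt (by positivity)]

noncomputable def spanLe {A : Matrix m m ℂ} (hA : A.IsHermitian) (x : ℝ) :
    Submodule ℂ (EuclideanSpace ℂ m) :=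
  Submodule.span ℂ (⇑hA.eigenvectorBasis '' {i | hA.eigenvalues i ≤ x})

noncomputable def spanGt {A : Matrix m m ℂ} (hA : A.IsHermitian) (x : ℝ) :
    Submodule ℂ (EuclideanSpace ℂ m) :=
  Submodule.span ℂ (⇑hA.eigenvectorBasis '' {i | x < hA.eigenvalues i})

theorem repr_eq_zero_of_mem_span {A : Matrix m m ℂ} (hA : A.IsHermitian)
    {s : Set m} {v : EuclideanSpace ℂ m}
    (hv : v ∈ Submodule.span ℂ (⇑hA.eigenvectorBasis '' s)) {i : m} (hi : i ∉ s) :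
    hA.eigenvectorBasis.repr v i = 0 := by
  set b := hA.eigenvectorBasis
  have hb : ⇑b = ⇑b.toBasis := by simp
  rw [hb] at hv
  have := (Module.Basis.mem_span_image b.toBasis).1 hv
  have h2 : b.toBasis.repr v i = 0 := by
    by_contra h
    exact hi (this (Finsupp.mem_support_iff.2 h))
  rwa [b.coe_toBasis_repr_apply] at h2

theorem finrank_spanLe {A : Matrix m m ℂ} (hA : A.IsHermitian) (x : ℝ) :
    Module.finrank ℂ (spanLe hA x) = Ncount hA x := by
  set b := hA.eigenvectorBasis
  have hli : LinearIndependent ℂ (fun i : {i // hA.eigenvalues i ≤ x} => b i) :=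
    b.orthonormal.linearIndependent.comp _ Subtype.val_injective
  have himg : ⇑b '' {i | hA.eigenvalues i ≤ x}
      = Set.range (fun i : {i // hA.eigenvalues i ≤ x} => b i) :=
    Set.image_eq_range _ _
  rw [spanLe, himg, finrank_span_eq_card hli, Ncount]
  simp [Fintype.card_subtype]

theorem finrank_spanGt {A : Matrix m m ℂ} (hA : A.IsHermitian) (x : ℝ) :
    Module.finrank ℂ (spanGt hA x) = Fintype.card m - Ncount hA x := by
  set b := hA.eigenvectorBasis
  have hli : LinearIndependent ℂ (fun i : {i // x < hA.eigenvalues i} => b i) :=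
    b.orthonormal.linearIndependent.comp _ Subtype.val_injective
  have himg : ⇑b '' {i | x < hA.eigenvalues i}
      = Set.range (fun i : {i // x < hA.eigenvalues i} => b i) :=
    Set.image_eq_range _ _
  rw [spanGt, himg, finrank_span_eq_card hli, Ncount]
  have h := Finset.card_filter_add_card_filter_not
    (s := (univ : Finset m)) (p := fun i => hA.eigenvalues i ≤ x)
  simp only [not_le, Finset.card_univ] at h
  rw [Fintype.card_subtype]
  omega

theorem qf_le_of_mem_spanLe {A : Matrix m m ℂ} (hA : A.IsHermitian) (x : ℝ)
    {v : EuclideanSpace ℂ m} (hv : v ∈ spanLe hA x) : qf A v ≤ x * ‖v‖ ^ 2 := by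
  rw [qf_eq A hA, norm_sq_eq A hA, Finset.mul_sum]
  refine Finset.sum_le_sum fun i _ => ?_
  by_cases hi : hA.eigenvalues i ≤ x
  · exact mul_le_mul_of_nonneg_right hi (by positivity)
  · rw [repr_eq_zero_of_mem_span hA hv hi]; simp

theorem qf_gt_of_mem_spanGt {A : Matrix m m ℂ} (hA : A.IsHermitian) (x : ℝ)
    {v : EuclideanSpace ℂ m} (hv : v ∈ spanGt hA x) (hv0 : v ≠ 0) : x * ‖v‖ ^ 2 < qf A v := by
  rw [qf_eq A hA, norm_sq_eq A hA, Finset.mul_sum]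
  obtain ⟨i0, hi0⟩ : ∃ i, hA.eigenvectorBasis.repr v i ≠ 0 := by
    by_contra h
    push_neg at h
    apply hv0
    have : hA.eigenvectorBasis.repr v = 0 := by
      ext i; exact h i
    simpa using congrArg hA.eigenvectorBasis.repr.symm this
  have hi0' : x < hA.eigenvalues i0 := by
    by_contra h
    exact hi0 (repr_eq_zero_of_mem_span hA hv (by simpa using h))
  refine Finset.sum_lt_sum (fun i _ => ?_) ⟨i0, Finset.mem_univ i0, ?_⟩
  · by_cases hi : x < hA.eigenvalues i
    · exact mul_le_mul_of_nonneg_right hi.le (by positivity)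
    · rw [repr_eq_zero_of_mem_span hA hv (by simpa using hi)]; simp
  · exact mul_lt_mul_of_pos_right hi0' (pow_pos (norm_pos_iff.mpr hi0) 2)

theorem qf_submatrix (A : Matrix m m ℂ) (e : Equiv.Perm m) (v : EuclideanSpace ℂ m) :
    qf (A.submatrix e e) v
      = qf A ((LinearIsometryEquiv.piLpCongrLeft 2 ℂ ℂ e) v) := by
  set L := LinearIsometryEquiv.piLpCongrLeft 2 ℂ ℂ e with hL
  have hmv : (WithLp.toLp 2 ((A.submatrix e e).mulVec v) : EuclideanSpace ℂ m)
      = L.symm ((WithLp.toLp 2 (A.mulVec (L v)) : EuclideanSpace ℂ m)) := by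
    ext a
    show ∑ b, A (e a) (e b) * v b = _
    have h1 : (L.symm ((WithLp.toLp 2 (A.mulVec (L v)) : EuclideanSpace ℂ m))) a
        = (A.mulVec (L v)) (e a) := by
      rw [LinearIsometryEquiv.piLpCongrLeft_symm, LinearIsometryEquiv.piLpCongrLeft_apply]
      rfl
    rw [h1]
    show _ = ∑ c, A (e a) c * (L v) c
    refine Fintype.sum_equiv e _ _ fun b => ?_
    congr 1
    rw [hL, LinearIsometryEquiv.piLpCongrLeft_apply]
    show v b = v (e.symm (e b))
    rw [Equiv.symm_apply_apply]
  rw [qf, qf, hmv]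
  rw [← LinearIsometryEquiv.inner_map_map L v]
  rw [LinearIsometryEquiv.apply_symm_apply]

theorem Ncount_le_card {A : Matrix m m ℂ} (hA : A.IsHermitian) (x : ℝ) :
    Ncount hA x ≤ Fintype.card m :=
  le_trans (Finset.card_filter_le _ _) (by simp)

theorem finrank_le_Ncount {B : Matrix m m ℂ} (hB : B.IsHermitian) (x : ℝ)
    (W : Submodule ℂ (EuclideanSpace ℂ m))
    (hW : ∀ v ∈ W, qf B v ≤ x * ‖v‖ ^ 2) :
    Module.finrank ℂ W ≤ Ncount hB x := by
  have hdisj : W ⊓ spanGt hB x = ⊥ := by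
    rw [Submodule.eq_bot_iff]
    intro v hv
    by_contra h0
    exact absurd (hW v hv.1) (not_le.2 (qf_gt_of_mem_spanGt hB x hv.2 h0))
  have h1 := Submodule.finrank_sup_add_finrank_inf_eq W (spanGt hB x)
  rw [hdisj] at h1
  have h2 : Module.finrank ℂ ↥(W ⊔ spanGt hB x) ≤ Fintype.card m := by
    have := Submodule.finrank_le (W ⊔ spanGt hB x)
    rwa [finrank_euclideanSpace] at this
  have h3 := finrank_spanGt hB x
  have h4 := Ncount_le_card hB x
  simp only [finrank_bot] at h1
  omega

theorem Ncount_le_of_agree {A B : Matrix m m ℂ} (hA : A.IsHermitian) (hB : B.IsHermitian)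
    (x : ℝ) (K : Submodule ℂ (EuclideanSpace ℂ m))
    (hK : ∀ v ∈ K, A.mulVec v = B.mulVec v)
    (hKr : Fintype.card m ≤ Module.finrank ℂ K + 2) :
    Ncount hA x ≤ Ncount hB x + 2 := by
  set W := spanLe hA x ⊓ K with hWdef
  have hW : ∀ v ∈ W, qf B v ≤ x * ‖v‖ ^ 2 := by
    intro v hv
    have hq : qf B v = qf A v := by unfold qf; rw [← hK v hv.2]
    rw [hq]
    exact qf_le_of_mem_spanLe hA x hv.1
  have h1 := finrank_le_Ncount hB x W hW
  have h2 := Submodule.finrank_sup_add_finrank_inf_eq (spanLe hA x) K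
  have h3 : Module.finrank ℂ ↥(spanLe hA x ⊔ K) ≤ Fintype.card m := by
    have := Submodule.finrank_le (spanLe hA x ⊔ K)
    rwa [finrank_euclideanSpace] at this
  have h4 := finrank_spanLe hA x
  rw [← hWdef] at h2
  omega

theorem Ncount_congr {A B : Matrix m m ℂ} (h : A = B) (hA : A.IsHermitian)
    (hB : B.IsHermitian) (x : ℝ) : Ncount hA x = Ncount hB x := by subst h; rfl

theorem Ncount_le_submatrix_perm {A : Matrix m m ℂ} (hA : A.IsHermitian) (e : Equiv.Perm m)
    (h' : (A.submatrix e e).IsHermitian) (x : ℝ) :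
    Ncount hA x ≤ Ncount h' x := by
  set L := LinearIsometryEquiv.piLpCongrLeft 2 ℂ ℂ e with hLdef
  set W := (spanLe hA x).map (L.symm.toLinearEquiv : EuclideanSpace ℂ m →ₗ[ℂ] EuclideanSpace ℂ m)
    with hWdef
  have hW : ∀ w ∈ W, qf (A.submatrix e e) w ≤ x * ‖w‖ ^ 2 := by
    intro w hw
    obtain ⟨v, hv, rfl⟩ := hw
    simp only [LinearIsometryEquiv.coe_toLinearEquiv, LinearEquiv.coe_coe]
    have h1 : qf (A.submatrix e e) (L.symm v) = qf A v := by
      rw [qf_submatrix]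
      congr 1
      exact L.apply_symm_apply v
    have h2 : ‖(L.symm v : EuclideanSpace ℂ m)‖ = ‖v‖ := L.symm.norm_map v
    rw [h1, h2]
    exact qf_le_of_mem_spanLe hA x hv
  have h3 := finrank_le_Ncount h' x W hW
  have h4 : Module.finrank ℂ W = Module.finrank ℂ (spanLe hA x) := by
    rw [hWdef]
    exact LinearEquiv.finrank_map_eq _ _
  rw [h4, finrank_spanLe] at h3
  exact h3

theorem Ncount_submatrix_perm {A : Matrix m m ℂ} (hA : A.IsHermitian) (e : Equiv.Perm m)
    (h' : (A.submatrix e e).IsHermitian) (x : ℝ) :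
    Ncount h' x = Ncount hA x := by
  refine le_antisymm ?_ (Ncount_le_submatrix_perm hA e h' x)
  have hEq : (A.submatrix e e).submatrix ⇑e.symm ⇑e.symm = A := by
    rw [Matrix.submatrix_submatrix]
    have : (⇑e ∘ ⇑e.symm) = id := by funext a; simp
    rw [this, Matrix.submatrix_id_id]
  have h'' : ((A.submatrix e e).submatrix ⇑e.symm ⇑e.symm).IsHermitian := hEq.symm ▸ hA
  have := Ncount_le_submatrix_perm h' e.symm h'' x
  rwa [Ncount_congr hEq h'' hA] at this

noncomputable def phiD (D : Matrix m m ℂ) (i0 : m) : EuclideanSpace ℂ m →ₗ[ℂ] ℂ × ℂ where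
  toFun v := (v i0, (D.mulVec v) i0)
  map_add' v w := by
    simp only [Matrix.mulVec, dotProduct, WithLp.ofLp_add, Pi.add_apply, Prod.mk_add_mk, Prod.mk.injEq,
      mul_add, Finset.sum_add_distrib]
  map_smul' c v := by
    simp only [Matrix.mulVec, dotProduct, WithLp.ofLp_smul, Pi.smul_apply, smul_eq_mul, RingHom.id_apply,
      Prod.smul_mk, Prod.mk.injEq, Finset.mul_sum]
    refine ⟨trivial, Finset.sum_congr rfl fun b _ => by ring⟩

theorem Ncount_le_of_row_col {A B : Matrix m m ℂ} (hA : A.IsHermitian) (hB : B.IsHermitian)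
    (x : ℝ) (i0 : m) (hAB : ∀ a b, a ≠ i0 → b ≠ i0 → A a b = B a b) :
    Ncount hA x ≤ Ncount hB x + 2 := by
  set D := A - B with hD
  set K := LinearMap.ker (phiD D i0) with hKdef
  refine Ncount_le_of_agree hA hB x K ?_ ?_
  · intro v hv
    rw [LinearMap.mem_ker] at hv
    have hv1 : (v : m → ℂ) i0 = 0 := congrArg Prod.fst hv
    have hv2 : (D.mulVec v) i0 = 0 := congrArg Prod.snd hv
    have hDv : D.mulVec v = 0 := by
      funext a
      by_cases ha : a = i0
      · rw [ha]; exact hv2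
      · show ∑ b, D a b * v b = 0
        rw [Finset.sum_eq_single i0]
        · rw [hv1, mul_zero]
        · intro b _ hb
          have : D a b = 0 := by
            rw [hD]; show A a b - B a b = 0
            rw [hAB a b ha hb, sub_self]
          rw [this, zero_mul]
        · intro h; exact absurd (Finset.mem_univ i0) h
    have := Matrix.sub_mulVec A B v
    rw [← hD, hDv] at this
    exact (sub_eq_zero.1 this.symm)
  · rw [hKdef]
    have h1 := LinearMap.finrank_range_add_finrank_ker (phiD D i0)
    have h2 : Module.finrank ℂ (LinearMap.range (phiD D i0)) ≤ 2 := by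
      have := Submodule.finrank_le (LinearMap.range (phiD D i0))
      simpa using this
    rw [finrank_euclideanSpace] at h1
    omega

end Spectral

theorem fESD_congr {n k : ℕ} (hk : k ≤ n) (M : Matrix (Fin n) (Fin n) ℂ)
    (hM : M.IsHermitian) (p : Equiv.Perm (Fin n)) (x : ℝ) (g : Fin k → Fin n)
    (h : ∀ a : Fin k, p (Fin.castLE hk a) = g a) :
    fESD hk M hM p x = esd (hM.submatrix g) x :=
  congrArg (fun f : Fin k → Fin n => esd (hM.submatrix f) x) (funext h)

theorem fESD_eq_both_lt {n k : ℕ} (hk : k ≤ n) (M : Matrix (Fin n) (Fin n) ℂ)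
    (hM : M.IsHermitian) (x : ℝ) (σ : Equiv.Perm (Fin n)) (I J : Fin n)
    (hI : (I : ℕ) < k) (hJ : (J : ℕ) < k) :
    fESD hk M hM (σ * Equiv.swap I J) x = fESD hk M hM σ x := by
  set a0 : Fin k := ⟨I, hI⟩
  set b0 : Fin k := ⟨J, hJ⟩
  set e : Equiv.Perm (Fin k) := Equiv.swap a0 b0
  set f : Fin k → Fin n := fun a => σ (Fin.castLE hk a) with hf
  have hIc : Fin.castLE hk a0 = I := Fin.ext rfl
  have hJc : Fin.castLE hk b0 = J := Fin.ext rfl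
  have hpt : ∀ a : Fin k, (σ * Equiv.swap I J) (Fin.castLE hk a) = f (e a) := by
    intro a
    show σ (Equiv.swap I J (Fin.castLE hk a)) = σ (Fin.castLE hk (Equiv.swap a0 b0 a))
    congr 1
    by_cases ha : a = a0
    · rw [ha, hIc, Equiv.swap_apply_left, Equiv.swap_apply_left, hJc]
    · by_cases hb : a = b0
      · rw [hb, hJc, Equiv.swap_apply_right, Equiv.swap_apply_right, hIc]
      · rw [Equiv.swap_apply_of_ne_of_ne (fun h => ha (by rw [← hIc] at h; exact Fin.castLE_injective hk h))
          (fun h => hb (by rw [← hJc] at h; exact Fin.castLE_injective hk h)),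
          Equiv.swap_apply_of_ne_of_ne ha hb]
  have h1 : fESD hk M hM (σ * Equiv.swap I J) x = esd (hM.submatrix (fun a => f (e a))) x :=
    fESD_congr hk M hM _ x _ hpt
  have h2 : esd (hM.submatrix (fun a => f (e a))) x = esd ((hM.submatrix f).submatrix ⇑e) x := rfl
  rw [h1, h2]
  show (Ncount ((hM.submatrix f).submatrix ⇑e) x : ℝ) / (Fintype.card (Fin k))
      = fESD hk M hM σ x
  rw [Ncount_submatrix_perm (hM.submatrix f) e _ x]
  rfl

theorem fESD_eq_both_ge {n k : ℕ} (hk : k ≤ n) (M : Matrix (Fin n) (Fin n) ℂ)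
    (hM : M.IsHermitian) (x : ℝ) (σ : Equiv.Perm (Fin n)) (I J : Fin n)
    (hI : ¬ (I : ℕ) < k) (hJ : ¬ (J : ℕ) < k) :
    fESD hk M hM (σ * Equiv.swap I J) x = fESD hk M hM σ x := by
  refine fESD_congr hk M hM _ x _ fun a => ?_
  show σ (Equiv.swap I J (Fin.castLE hk a)) = σ (Fin.castLE hk a)
  congr 1
  exact Equiv.swap_apply_of_ne_of_ne
    (fun h => hI (by rw [← h]; exact a.isLt)) (fun h => hJ (by rw [← h]; exact a.isLt))

theorem sq_diff_le_mixed {n k : ℕ} (hk0 : 0 < k) (hk : k ≤ n)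
    (M : Matrix (Fin n) (Fin n) ℂ) (hM : M.IsHermitian) (x : ℝ) (σ : Equiv.Perm (Fin n))
    (I J : Fin n) (hI : (I : ℕ) < k) (hJ : ¬ (J : ℕ) < k) :
    (fESD hk M hM σ x - fESD hk M hM (σ * Equiv.swap I J) x) ^ 2 ≤ 4 / (k : ℝ) ^ 2 := by
  set f : Fin k → Fin n := fun a => σ (Fin.castLE hk a) with hf
  set g : Fin k → Fin n := fun a => (σ * Equiv.swap I J) (Fin.castLE hk a) with hg
  set a0 : Fin k := ⟨I, hI⟩
  have hIc : Fin.castLE hk a0 = I := Fin.ext rfl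
  have hfg : ∀ c : Fin k, c ≠ a0 → f c = g c := by
    intro c hc
    show σ _ = σ (Equiv.swap I J (Fin.castLE hk c))
    congr 1
    rw [Equiv.swap_apply_of_ne_of_ne
      (fun h => hc (by rw [← hIc] at h; exact Fin.castLE_injective hk h))
      (fun h => hJ (by rw [← h]; exact c.isLt))]
  have hagree : ∀ a b : Fin k, a ≠ a0 → b ≠ a0 →
      (M.submatrix f f) a b = (M.submatrix g g) a b := by
    intro a b ha hb
    show M (f a) (f b) = M (g a) (g b)
    rw [hfg a ha, hfg b hb]
  have hagree' : ∀ a b : Fin k, a ≠ a0 → b ≠ a0 →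
      (M.submatrix g g) a b = (M.submatrix f f) a b := fun a b ha hb => (hagree a b ha hb).symm
  have h1 := Ncount_le_of_row_col (hM.submatrix f) (hM.submatrix g) x a0 hagree
  have h2 := Ncount_le_of_row_col (hM.submatrix g) (hM.submatrix f) x a0 hagree'
  have e1 : fESD hk M hM σ x = (Ncount (hM.submatrix f) x : ℝ) / k := by
    rw [fESD, esd_eq_Ncount, Fintype.card_fin]
  have e2 : fESD hk M hM (σ * Equiv.swap I J) x = (Ncount (hM.submatrix g) x : ℝ) / k := by
    rw [fESD, esd_eq_Ncount, Fintype.card_fin]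
  rw [e1, e2, div_sub_div_same, div_pow]
  have hkpos : (0 : ℝ) < (k : ℝ) ^ 2 := by positivity
  have hsq : ((Ncount (hM.submatrix f) x : ℝ) - (Ncount (hM.submatrix g) x : ℝ)) ^ 2 ≤ 4 := by
    have hc1 : (Ncount (hM.submatrix f) x : ℝ) ≤ (Ncount (hM.submatrix g) x : ℝ) + 2 := by
      exact_mod_cast h1
    have hc2 : (Ncount (hM.submatrix g) x : ℝ) ≤ (Ncount (hM.submatrix f) x : ℝ) + 2 := by
      exact_mod_cast h2
    nlinarith
  gcongr

/-- For a random transposition `τ = (I, J)` with `I, J` independent uniform on `{1,…,n}`,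
`E[(f(σ) - f(στ))²] ≤ 8 / (k n)`. -/
theorem expectation_sq_diff_le {n k : ℕ} (hk0 : 0 < k) (hk : k ≤ n)
    (M : Matrix (Fin n) (Fin n) ℂ) (hM : M.IsHermitian) (x : ℝ) (σ : Equiv.Perm (Fin n)) :
    (∑ I : Fin n, ∑ J : Fin n,
        (fESD hk M hM σ x - fESD hk M hM (σ * Equiv.swap I J) x) ^ 2) / (n : ℝ) ^ 2 ≤
      8 / (k * n) := by
  have hn0 : 0 < n := lt_of_lt_of_le hk0 hk
  have hkne : ((k : ℝ)) ≠ 0 := Nat.cast_ne_zero.2 hk0.ne'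
  have hnne : ((n : ℝ)) ≠ 0 := Nat.cast_ne_zero.2 hn0.ne'
  set c : ℝ := 4 / (k : ℝ) ^ 2 with hc
  have hc0 : 0 ≤ c := by positivity
  have hterm : ∀ I J : Fin n,
      (fESD hk M hM σ x - fESD hk M hM (σ * Equiv.swap I J) x) ^ 2
        ≤ (if (I : ℕ) < k then c else 0) + (if (J : ℕ) < k then c else 0) := by
    intro I J
    by_cases hI : (I : ℕ) < k <;> by_cases hJ : (J : ℕ) < k
    · rw [fESD_eq_both_lt hk M hM x σ I J hI hJ, sub_self, if_pos hI, if_pos hJ]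
      have : (0:ℝ)^2 = 0 := by ring
      rw [this]
      positivity
    · rw [if_pos hI, if_neg hJ, add_zero]
      exact sq_diff_le_mixed hk0 hk M hM x σ I J hI hJ
    · rw [if_neg hI, if_pos hJ, zero_add, Equiv.swap_comm]
      exact sq_diff_le_mixed hk0 hk M hM x σ J I hJ hI
    · rw [fESD_eq_both_ge hk M hM x σ I J hI hJ, sub_self, if_neg hI, if_neg hJ]
      simp
  have hcard : ((univ : Finset (Fin n)).filter fun j : Fin n => (j : ℕ) < k).card = k := by
    have heq : ((univ : Finset (Fin n)).filter fun j : Fin n => (j : ℕ) < k)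
        = Finset.map ⟨Fin.castLE hk, Fin.castLE_injective hk⟩ (univ : Finset (Fin k)) := by
      ext j
      simp only [Finset.mem_filter, Finset.mem_univ, true_and, Finset.mem_map,
        Function.Embedding.coeFn_mk]
      constructor
      · intro hj; exact ⟨⟨(j : ℕ), hj⟩, Fin.ext rfl⟩
      · rintro ⟨a, rfl⟩; exact a.isLt
    rw [heq, Finset.card_map, Finset.card_univ, Fintype.card_fin]
  have hsumite : ∑ J : Fin n, (if (J : ℕ) < k then c else 0) = (k : ℝ) * c := by
    rw [Finset.sum_ite, Finset.sum_const, Finset.sum_const_zero, add_zero, hcard,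
      nsmul_eq_mul]
  have hsum : (∑ I : Fin n, ∑ J : Fin n,
      (fESD hk M hM σ x - fESD hk M hM (σ * Equiv.swap I J) x) ^ 2) ≤ 8 * n / k := by
    calc (∑ I : Fin n, ∑ J : Fin n,
        (fESD hk M hM σ x - fESD hk M hM (σ * Equiv.swap I J) x) ^ 2)
        ≤ ∑ I : Fin n, ∑ J : Fin n,
            ((if (I : ℕ) < k then c else 0) + (if (J : ℕ) < k then c else 0)) :=
          Finset.sum_le_sum fun I _ => Finset.sum_le_sum fun J _ => hterm I J
      _ = ∑ I : Fin n, ((n : ℝ) * (if (I : ℕ) < k then c else 0) + (k : ℝ) * c) := by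
          refine Finset.sum_congr rfl fun I _ => ?_
          rw [Finset.sum_add_distrib, hsumite, Finset.sum_const, Finset.card_univ,
            Fintype.card_fin, nsmul_eq_mul]
      _ = (n : ℝ) * ((k : ℝ) * c) + (n : ℝ) * ((k : ℝ) * c) := by
          rw [Finset.sum_add_distrib, Finset.sum_const, ← Finset.mul_sum, hsumite,
            Finset.card_univ, Fintype.card_fin, nsmul_eq_mul]
      _ = 8 * n / k := by rw [hc]; field_simp; ring
  calc (∑ I : Fin n, ∑ J : Fin n,
      (fESD hk M hM σ x - fESD hk M hM (σ * Equiv.swap I J) x) ^ 2) / (n : ℝ) ^ 2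
      ≤ (8 * (n:ℝ) / (k:ℝ)) / (n : ℝ) ^ 2 := by gcongr
    _ = 8 / ((k:ℝ) * (n:ℝ)) := by field_simp
end

section
/- Let (Π,μ) be a reversible Markov chain on a finite set X with spectral gap λ₁ > 0. If f : X → ℝ satisfies (1/2)·sup_x Σ_y (f(x)-f(y))² Π(x,y) ≤ 1, then for every r ≥ 0, μ({x : f(x) ≥ ∫f dμ + r}) ≤ 3·exp(−r√λ₁/2). -/
open scoped Classical
open Finset

lemma exp_half_diff_sq (a b : ℝ) :
    (Real.exp (a/2) - Real.exp (b/2))^2 ≤ (a-b)^2/4 * (Real.exp a + Real.exp b) := by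
  wlog h : b ≤ a with H
  · have h2 := H b a (le_of_not_ge h)
    calc (Real.exp (a/2) - Real.exp (b/2))^2 = (Real.exp (b/2) - Real.exp (a/2))^2 := by ring
      _ ≤ (b-a)^2/4 * (Real.exp b + Real.exp a) := h2
      _ = (a-b)^2/4 * (Real.exp a + Real.exp b) := by ring
  · have h1 : Real.exp (a/2) - Real.exp (b/2) ≤ (a-b)/2 * Real.exp (a/2) := by
      have hexp := Real.add_one_le_exp ((b-a)/2)
      have h2 : Real.exp (b/2) = Real.exp (a/2) * Real.exp ((b-a)/2) := by
        rw [← Real.exp_add]; ring_nf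
      nlinarith [Real.exp_pos (a/2)]
    have h0 : 0 ≤ Real.exp (a/2) - Real.exp (b/2) :=
      sub_nonneg.2 (Real.exp_le_exp.2 (by linarith))
    have hsq : Real.exp (a/2) ^ 2 = Real.exp a := by
      rw [sq, ← Real.exp_add]; ring_nf
    nlinarith [Real.exp_pos b, Real.exp_pos (a/2), sq_nonneg ((a-b)/2 * Real.exp (a/2))]

/-- Ledoux's concentration inequality for reversible Markov chains with a spectral gap:
if `(Π, μ)` is reversible with spectral gap `λ₁ > 0` and `|||f|||_∞ ≤ 1`, then
`μ(f ≥ ∫ f dμ + r) ≤ 3 exp(-r √λ₁ / 2)`. -/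
theorem markov_chain_concentration {X : Type*} [Fintype X] [Nonempty X]
    (P : X → X → ℝ) (μ : X → ℝ)
    (hP : ∀ x y, 0 ≤ P x y) (hrow : ∀ x, ∑ y, P x y = 1)
    (hμ : ∀ x, 0 ≤ μ x) (hμ1 : ∑ x, μ x = 1)
    (hrev : ∀ x y, P x y * μ x = P y x * μ y)
    (lam : ℝ) (hlam : 0 < lam)
    (hgap : ∀ g : X → ℝ,
      lam * ∑ x, (g x - ∑ y, μ y * g y) ^ 2 * μ x ≤
        (1 / 2) * ∑ x, ∑ y, (g x - g y) ^ 2 * P x y * μ x)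
    (hlargest : ∀ lam' : ℝ,
      (∀ g : X → ℝ,
        lam' * ∑ x, (g x - ∑ y, μ y * g y) ^ 2 * μ x ≤
          (1 / 2) * ∑ x, ∑ y, (g x - g y) ^ 2 * P x y * μ x) → lam' ≤ lam)
    (f : X → ℝ)
    (hf : ∀ x, (1 / 2) * ∑ y, (f x - f y) ^ 2 * P x y ≤ 1)
    (r : ℝ) (hr : 0 ≤ r) :
    ∑ x ∈ Finset.univ.filter (fun x => (∑ y, μ y * f y) + r ≤ f x), μ x ≤
      3 * Real.exp (-r * Real.sqrt lam / 2) := by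
  classical
  set E : ℝ := ∑ y, μ y * f y with hE
  set F : ℝ → ℝ := fun t => ∑ x, μ x * Real.exp (t * f x) with hF
  obtain ⟨x₀, hx₀⟩ : ∃ x, 0 < μ x := by
    by_contra h
    push_neg at h
    have hz : ∑ x, μ x = 0 :=
      Finset.sum_eq_zero (fun x _ => le_antisymm (h x) (hμ x))
    rw [hz] at hμ1
    norm_num at hμ1
  have hFpos : ∀ t, 0 < F t := by
    intro t
    have h1 : 0 < μ x₀ * Real.exp (t * f x₀) := mul_pos hx₀ (Real.exp_pos _)
    have h2 : μ x₀ * Real.exp (t * f x₀) ≤ ∑ x, μ x * Real.exp (t * f x) :=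
      Finset.single_le_sum (f := fun x => μ x * Real.exp (t * f x))
        (fun x _ => mul_nonneg (hμ x) (Real.exp_pos _).le) (Finset.mem_univ x₀)
    rw [hF]
    linarith
  set G : ℝ → ℝ := fun t => Real.log (F t) with hG
  set s : ℝ := Real.sqrt lam / 2 with hs
  have hsqrt : 0 < Real.sqrt lam := Real.sqrt_pos.2 hlam
  have hspos : 0 < s := by rw [hs]; positivity
  have hs2 : s^2 = lam / 4 := by
    rw [hs, div_pow, Real.sq_sqrt hlam.le]; norm_num
  clear_value E F G s
  -- Step A: one application of the spectral gap to g = exp(t f / 2)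
  have keyA : ∀ t : ℝ, lam * (F t - (F (t/2))^2) ≤ t^2/2 * F t := by
    intro t
    set g : X → ℝ := fun x => Real.exp (t * f x / 2) with hg
    have hgx : ∀ x, g x = Real.exp (t * f x / 2) := fun x => rfl
    -- variance identity
    have hmean : ∑ y, μ y * g y = F (t/2) := by
      rw [hF]
      apply Finset.sum_congr rfl; intro y _
      rw [hgx y, show t * f y / 2 = t/2 * f y by ring]
    have hvar : ∑ x, (g x - ∑ y, μ y * g y) ^ 2 * μ x = F t - (F (t/2))^2 := by
      rw [hmean]
      have expand : ∀ x : X, (g x - F (t/2))^2 * μ x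
          = μ x * Real.exp (t * f x) - 2 * (F (t/2)) * (μ x * g x) + (F (t/2))^2 * μ x := by
        intro x
        have hg2 : g x ^ 2 = Real.exp (t * f x) := by
          rw [hgx x, sq, ← Real.exp_add,
            show t * f x / 2 + t * f x / 2 = t * f x by ring]
        have h1 : (g x - F (t/2))^2 * μ x
            = g x^2 * μ x - 2*(F (t/2))*(μ x * g x) + (F (t/2))^2 * μ x := by ring
        rw [h1, hg2]; ring
      rw [Finset.sum_congr rfl (fun x _ => expand x), Finset.sum_add_distrib,
        Finset.sum_sub_distrib, ← Finset.mul_sum, ← Finset.mul_sum]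
      rw [show ∑ x, μ x * g x = F (t/2) from hmean, hμ1, hF]
      ring
    -- Dirichlet form bound
    have hterm : ∀ x y : X, (g x - g y)^2 ≤
        t^2*(f x - f y)^2/4 * (Real.exp (t*f x) + Real.exp (t*f y)) := by
      intro x y
      have h1 := exp_half_diff_sq (t * f x) (t * f y)
      rw [hgx x, hgx y]
      calc (Real.exp (t * f x / 2) - Real.exp (t * f y / 2))^2
          ≤ (t*f x - t*f y)^2/4 * (Real.exp (t*f x) + Real.exp (t*f y)) := h1
        _ = t^2*(f x - f y)^2/4 * (Real.exp (t*f x) + Real.exp (t*f y)) := by ring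
    have hsum2 : ∀ x : X, ∑ y, (f x - f y)^2 * P x y ≤ 2 := fun x => by linarith [hf x]
    have step1 : ∑ x, ∑ y, (g x - g y)^2 * P x y * μ x ≤
        (∑ x, ∑ y, t^2*(f x - f y)^2/4 * Real.exp (t*f x) * P x y * μ x)
        + (∑ x, ∑ y, t^2*(f x - f y)^2/4 * Real.exp (t*f y) * P x y * μ x) := by
      rw [← Finset.sum_add_distrib]
      apply Finset.sum_le_sum; intro x _
      rw [← Finset.sum_add_distrib]
      apply Finset.sum_le_sum; intro y _
      have h1 : (g x - g y)^2 * P x y * μ x ≤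
          (t^2*(f x - f y)^2/4 * (Real.exp (t*f x) + Real.exp (t*f y))) * P x y * μ x :=
        mul_le_mul_of_nonneg_right (mul_le_mul_of_nonneg_right (hterm x y) (hP x y)) (hμ x)
      calc (g x - g y)^2 * P x y * μ x ≤ _ := h1
        _ = t^2*(f x - f y)^2/4 * Real.exp (t*f x) * P x y * μ x
            + t^2*(f x - f y)^2/4 * Real.exp (t*f y) * P x y * μ x := by ring
    have partA : ∑ x, ∑ y, t^2*(f x - f y)^2/4 * Real.exp (t*f x) * P x y * μ x ≤
        t^2/2 * F t := by
      rw [hF, Finset.mul_sum]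
      apply Finset.sum_le_sum; intro x _
      have heq : ∑ y, t^2*(f x - f y)^2/4 * Real.exp (t*f x) * P x y * μ x
          = (t^2/4 * Real.exp (t*f x) * μ x) * ∑ y, (f x - f y)^2 * P x y := by
        rw [Finset.mul_sum]; apply Finset.sum_congr rfl; intro y _; ring
      rw [heq]
      have hc : 0 ≤ t^2/4 * Real.exp (t*f x) * μ x := mul_nonneg (by positivity) (hμ x)
      calc (t^2/4 * Real.exp (t*f x) * μ x) * ∑ y, (f x - f y)^2 * P x y
          ≤ (t^2/4 * Real.exp (t*f x) * μ x) * 2 := mul_le_mul_of_nonneg_left (hsum2 x) hc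
        _ = t^2/2 * (μ x * Real.exp (t*f x)) := by ring
    have partB : ∑ x, ∑ y, t^2*(f x - f y)^2/4 * Real.exp (t*f y) * P x y * μ x ≤
        t^2/2 * F t := by
      have swap : ∑ x, ∑ y, t^2*(f x - f y)^2/4 * Real.exp (t*f y) * P x y * μ x
          = ∑ y, ∑ x, t^2*(f y - f x)^2/4 * Real.exp (t*f y) * P y x * μ y := by
        rw [Finset.sum_comm]
        apply Finset.sum_congr rfl; intro y _
        apply Finset.sum_congr rfl; intro x _
        rw [show t^2*(f x - f y)^2/4 * Real.exp (t*f y) * P x y * μ x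
            = t^2*(f x - f y)^2/4 * Real.exp (t*f y) * (P x y * μ x) by ring, hrev x y]
        ring
      rw [swap, hF, Finset.mul_sum]
      apply Finset.sum_le_sum; intro y _
      have heq : ∑ x, t^2*(f y - f x)^2/4 * Real.exp (t*f y) * P y x * μ y
          = (t^2/4 * Real.exp (t*f y) * μ y) * ∑ x, (f y - f x)^2 * P y x := by
        rw [Finset.mul_sum]; apply Finset.sum_congr rfl; intro x _; ring
      rw [heq]
      have hc : 0 ≤ t^2/4 * Real.exp (t*f y) * μ y := mul_nonneg (by positivity) (hμ y)
      calc (t^2/4 * Real.exp (t*f y) * μ y) * ∑ x, (f y - f x)^2 * P y x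
          ≤ (t^2/4 * Real.exp (t*f y) * μ y) * 2 := mul_le_mul_of_nonneg_left (hsum2 y) hc
        _ = t^2/2 * (μ y * Real.exp (t*f y)) := by ring
    have hgapg := hgap g
    rw [hvar] at hgapg
    linarith [step1, partA, partB]
  -- Step B: logarithmic recursion
  have keyB : ∀ t : ℝ, 0 < t → t ≤ s → G t ≤ 2 * G (t/2) + 4 * t^2 / (7 * lam) := by
    intro t ht hts
    have ht2 : t^2 ≤ lam/4 := by nlinarith
    have hden : (0:ℝ) < lam - t^2/2 := by nlinarith
    have h1 : F t * (lam - t^2/2) ≤ lam * (F (t/2))^2 := by nlinarith [keyA t]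
    have h2 : F t ≤ (F (t/2))^2 * (lam / (lam - t^2/2)) := by
      rw [mul_div_assoc', le_div_iff₀ hden]; nlinarith
    have h3 : Real.log (F t) ≤ Real.log ((F (t/2))^2 * (lam / (lam - t^2/2))) :=
      Real.log_le_log (hFpos t) h2
    rw [Real.log_mul (pow_ne_zero 2 (hFpos _).ne') (div_pos hlam hden).ne',
      Real.log_pow] at h3
    have h4 : Real.log (lam / (lam - t^2/2)) ≤ lam / (lam - t^2/2) - 1 :=
      Real.log_le_sub_one_of_pos (div_pos hlam hden)
    have h5 : lam / (lam - t^2/2) - 1 ≤ 4 * t^2 / (7 * lam) := by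
      rw [div_sub_one hden.ne', div_le_div_iff₀ hden (by positivity)]
      nlinarith
    rw [hG]
    simp only
    push_cast at h3
    linarith
  -- Step C: iteration
  have keyC : ∀ n : ℕ, G s ≤ 2^n * G (s/2^n) + 8*s^2/(7*lam) * (1 - (1/2:ℝ)^n) := by
    intro n
    induction n with
    | zero => simp
    | succ n ih =>
      have h2n : (0:ℝ) < 2^n := by positivity
      have hts : s / 2^n ≤ s := by
        rw [div_le_iff₀ h2n]
        nlinarith [one_le_pow₀ (by norm_num : (1:ℝ) ≤ 2) (n := n)]
      have hb := keyB (s/2^n) (by positivity) hts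
      have hhalf : (s/2^n)/2 = s/2^(n+1) := by rw [pow_succ]; ring
      rw [hhalf] at hb
      have hmul := mul_le_mul_of_nonneg_left hb h2n.le
      have harith : 2^n * (2 * G (s/2^(n+1)) + 4 * (s/2^n)^2 / (7*lam))
          = 2^(n+1) * G (s/2^(n+1)) + 8*s^2/(7*lam) * ((1/2:ℝ)^n - (1/2:ℝ)^(n+1)) := by
        have hq : ((1:ℝ)/2)^n = 1/2^n := by rw [div_pow, one_pow]
        rw [pow_succ, pow_succ, hq]
        field_simp
        have h12 : ((1:ℝ)/2)^n * 2^n = 1 := by rw [← mul_pow]; norm_num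
        linear_combination (4*s^2) * h12
      rw [harith] at hmul
      calc G s ≤ 2^n * G (s/2^n) + 8*s^2/(7*lam) * (1 - (1/2:ℝ)^n) := ih
        _ ≤ 2^(n+1) * G (s/2^(n+1)) + 8*s^2/(7*lam) * ((1/2:ℝ)^n - (1/2:ℝ)^(n+1))
            + 8*s^2/(7*lam) * (1 - (1/2:ℝ)^n) := by linarith
        _ = 2^(n+1) * G (s/2^(n+1)) + 8*s^2/(7*lam) * (1 - (1/2:ℝ)^(n+1)) := by ring
  -- Step D: limit as n → ∞
  have hFderiv : HasDerivAt F E 0 := by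
    rw [hF]
    have h : ∀ x ∈ Finset.univ (α := X),
        HasDerivAt (fun u => μ x * Real.exp (u * f x)) (μ x * f x) 0 := by
      intro x _
      have h1 : HasDerivAt (fun u : ℝ => u * f x) (f x) 0 := hasDerivAt_mul_const (f x)
      have h3 := (h1.exp).const_mul (μ x)
      simpa using h3
    rw [hE]
    exact HasDerivAt.fun_sum h
  have hF0 : F 0 = 1 := by rw [hF]; simp [hμ1]
  have hGderiv : HasDerivAt G E 0 := by
    rw [hG]
    have := hFderiv.log (by rw [hF0]; norm_num)
    simpa [hF0] using this
  have hG0 : G 0 = 0 := by rw [hG]; simp [hF0]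
  have hslope := hasDerivAt_iff_tendsto_slope.mp hGderiv
  have hseq : Filter.Tendsto (fun n : ℕ => s / 2^n) Filter.atTop (nhdsWithin 0 {(0:ℝ)}ᶜ) := by
    rw [tendsto_nhdsWithin_iff]
    constructor
    · have h1 : Filter.Tendsto (fun n:ℕ => ((1:ℝ)/2)^n) Filter.atTop (nhds 0) :=
        tendsto_pow_atTop_nhds_zero_of_lt_one (by norm_num) (by norm_num)
      have h2 := h1.const_mul s
      simp only [mul_zero] at h2
      convert h2 using 2 with n
      rw [div_pow, one_pow]
      ring
    · filter_upwards with n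
      simp only [Set.mem_compl_iff, Set.mem_singleton_iff]
      positivity
  have hlim : Filter.Tendsto (fun n:ℕ => 2^n * G (s/2^n)) Filter.atTop (nhds (s * E)) := by
    have h1 := hslope.comp hseq
    have h2 := h1.const_mul s
    apply h2.congr
    intro n
    simp only [Function.comp_apply, slope_def_field]
    rw [hG0]
    have hne : s / 2^n ≠ 0 := by positivity
    field_simp
    simp only [sub_zero, mul_zero]
    rw [mul_div_assoc, mul_comm, div_mul_cancel₀ _ hspos.ne']
  have hGs : G s ≤ s * E + 8*s^2/(7*lam) := by
    have hlim2 := hlim.add_const (8*s^2/(7*lam))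
    apply ge_of_tendsto' hlim2
    intro n
    have hq : (0:ℝ) ≤ (1/2:ℝ)^n := by positivity
    have hC : (0:ℝ) ≤ 8*s^2/(7*lam) := by positivity
    nlinarith [keyC n]
  have hC27 : 8*s^2/(7*lam) = 2/7 := by
    rw [hs2]; field_simp; ring
  rw [hC27] at hGs
  have hFs : F s ≤ Real.exp (s*E + 2/7) := by
    rw [← Real.exp_log (hFpos s)]
    apply Real.exp_le_exp.2
    rw [show Real.log (F s) = G s from by rw [hG]]
    exact hGs
  -- Step E: Markov / Chernoff
  calc ∑ x ∈ Finset.univ.filter (fun x => E + r ≤ f x), μ x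
      ≤ ∑ x ∈ Finset.univ.filter (fun x => E + r ≤ f x),
          μ x * Real.exp (s * (f x - (E + r))) := by
        apply Finset.sum_le_sum; intro x hx
        rw [Finset.mem_filter] at hx
        nth_rewrite 1 [← mul_one (μ x)]
        exact mul_le_mul_of_nonneg_left
          (Real.one_le_exp (mul_nonneg hspos.le (by linarith [hx.2]))) (hμ x)
    _ ≤ ∑ x, μ x * Real.exp (s * (f x - (E + r))) :=
        Finset.sum_le_sum_of_subset_of_nonneg (Finset.filter_subset _ _)
          (fun x _ _ => mul_nonneg (hμ x) (Real.exp_pos _).le)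
    _ = Real.exp (-(s*(E+r))) * F s := by
        rw [hF, Finset.mul_sum]
        apply Finset.sum_congr rfl; intro x _
        rw [show s * (f x - (E+r)) = s * f x + (-(s*(E+r))) by ring, Real.exp_add]
        ring
    _ ≤ Real.exp (-(s*(E+r))) * Real.exp (s*E + 2/7) :=
        mul_le_mul_of_nonneg_left hFs (Real.exp_pos _).le
    _ = Real.exp (2/7) * Real.exp (-(s*r)) := by
        rw [← Real.exp_add, ← Real.exp_add]
        congr 1
        ring
    _ ≤ 3 * Real.exp (-(s*r)) := by
        have he : Real.exp (2/7) ≤ 3 := by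
          calc Real.exp (2/7) ≤ Real.exp 1 := Real.exp_le_exp.2 (by norm_num)
            _ ≤ 2.7182818286 := Real.exp_one_lt_d9.le
            _ ≤ 3 := by norm_num
        exact mul_le_mul_of_nonneg_right he (Real.exp_pos _).le
    _ = 3 * Real.exp (-r * Real.sqrt lam / 2) := by
        rw [hs]
        congr 2
        ring
end

section
/- Let M be an n×n Hermitian matrix, 1 ≤ k ≤ n, and let A be a uniformly random k×k principal submatrix of M (obtained as the submatrix indexed by π(1),...,π(k) for π uniform on S_n). Let F(x) = E[F_A(x)]. Then for every fixed x ∈ ℝ and r ≥ 0, P(|F_A(x) − F(x)| ≥ r) ≤ 6·exp(−r√k/√8). -/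
open scoped Classical
open Matrix Finset

/-- `F(x) = E[F_A(x)]` for a uniformly random `k × k` principal submatrix. -/
noncomputable def meanESD {n k : ℕ} (hk : k ≤ n) (M : Matrix (Fin n) (Fin n) ℂ)
    (hM : M.IsHermitian) (x : ℝ) : ℝ :=
  (∑ p : Equiv.Perm (Fin n), fESD hk M hM p x) / Fintype.card (Equiv.Perm (Fin n))

noncomputable section ESDAuxSection
namespace ESDAux

variable {k : ℕ}


variable {k : ℕ}

/-- eigenvalue counting function -/
def evN {A : Matrix (Fin k) (Fin k) ℂ} (hA : A.IsHermitian) (x : ℝ) : ℕ :=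
  (Finset.univ.filter fun i => hA.eigenvalues i ≤ x).card

variable {A : Matrix (Fin k) (Fin k) ℂ} (hA : A.IsHermitian)

lemma T_eigen (j : Fin k) : Matrix.toEuclideanLin A (hA.eigenvectorBasis j)
    = (hA.eigenvalues j : ℂ) • hA.eigenvectorBasis j := by
  rw [Matrix.toEuclideanLin_apply]; ext i; simp [hA.mulVec_eigenvectorBasis j]

lemma re_inner_T (v : EuclideanSpace ℂ (Fin k)) :
    (inner ℂ v (Matrix.toEuclideanLin A v) : ℂ).re
      = ∑ i, hA.eigenvalues i * ‖hA.eigenvectorBasis.repr v i‖^2 := by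
  set b := hA.eigenvectorBasis with hb
  conv_lhs => rw [show (Matrix.toEuclideanLin A v) = Matrix.toEuclideanLin A (∑ i, b.repr v i • b i) by rw [b.sum_repr]]
  rw [map_sum]
  simp_rw [_root_.map_smul, (show ∀ j, Matrix.toEuclideanLin A (b j) = (hA.eigenvalues j : ℂ) • b j from T_eigen hA), inner_sum, inner_smul_right]
  rw [Complex.re_sum]
  congr 1; ext i
  have h1 : (inner ℂ v (b i) : ℂ) = starRingEnd ℂ (b.repr v i) := by
    rw [← inner_conj_symm, b.repr_apply_apply]
  rw [h1]
  have h2 : b.repr v i * ((hA.eigenvalues i : ℂ) * starRingEnd ℂ (b.repr v i))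
      = (hA.eigenvalues i : ℂ) * (b.repr v i * starRingEnd ℂ (b.repr v i)) := by ring
  rw [h2, Complex.mul_conj, ← Complex.ofReal_mul, Complex.ofReal_re, Complex.normSq_eq_norm_sq]

lemma norm_sq_repr (v : EuclideanSpace ℂ (Fin k)) :
    ‖v‖^2 = ∑ i, ‖hA.eigenvectorBasis.repr v i‖^2 := by
  rw [← hA.eigenvectorBasis.repr.norm_map v, EuclideanSpace.norm_eq, Real.sq_sqrt]
  positivity

lemma repr_zero_of_span {t : Finset (Fin k)} {v : EuclideanSpace ℂ (Fin k)}
    (hv : v ∈ Submodule.span ℂ (hA.eigenvectorBasis '' ↑t)) {j : Fin k} (hj : j ∉ t) :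
    hA.eigenvectorBasis.repr v j = 0 := by
  rw [hA.eigenvectorBasis.repr_apply_apply]
  induction hv using Submodule.span_induction with
  | mem w hw =>
      obtain ⟨i, hi, rfl⟩ := hw
      exact hA.eigenvectorBasis.orthonormal.2 (fun h : j = i => hj (h ▸ hi))
  | zero => simp
  | add y z _ _ hy hz => rw [inner_add_right, hy, hz, add_zero]
  | smul c y _ hy => rw [inner_smul_right, hy, mul_zero]

lemma finrank_span_eig (t : Finset (Fin k)) :
    Module.finrank ℂ (Submodule.span ℂ (hA.eigenvectorBasis '' ↑t)) = t.card := by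
  have li : LinearIndependent ℂ (fun i : (t : Set (Fin k)) => hA.eigenvectorBasis i) :=
    (hA.eigenvectorBasis.orthonormal.linearIndependent).comp _ Subtype.val_injective
  have h := finrank_span_eq_card li
  have hr : (Set.range fun i : (t : Set (Fin k)) => hA.eigenvectorBasis i)
      = hA.eigenvectorBasis '' ↑t := by
    ext w; constructor
    · rintro ⟨i, rfl⟩; exact ⟨i, i.2, rfl⟩
    · rintro ⟨i, hi, rfl⟩; exact ⟨⟨i, hi⟩, rfl⟩
  rw [hr] at h
  rw [h]
  simp


/-- the coordinate-vanishing subspace -/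
def coordKer (s : Finset (Fin k)) : Submodule ℂ (EuclideanSpace ℂ (Fin k)) :=
  LinearMap.ker (LinearMap.pi fun i : s =>
    ((innerSL ℂ (EuclideanSpace.single (i : Fin k) (1:ℂ))) : EuclideanSpace ℂ (Fin k) →ₗ[ℂ] ℂ))

lemma mem_coordKer {s : Finset (Fin k)} {v : EuclideanSpace ℂ (Fin k)} :
    v ∈ coordKer s ↔ ∀ i ∈ s, v i = 0 := by
  simp [coordKer, LinearMap.mem_ker, funext_iff, EuclideanSpace.inner_single_left]

lemma coordKer_finrank (s : Finset (Fin k)) :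
    k ≤ Module.finrank ℂ (coordKer s) + s.card := by
  have h := LinearMap.finrank_range_add_finrank_ker (LinearMap.pi fun i : s =>
    ((innerSL ℂ (EuclideanSpace.single (i : Fin k) (1:ℂ))) : EuclideanSpace ℂ (Fin k) →ₗ[ℂ] ℂ))
  have h2 : Module.finrank ℂ
      (LinearMap.range (LinearMap.pi fun i : s =>
        ((innerSL ℂ (EuclideanSpace.single (i : Fin k) (1:ℂ))) : EuclideanSpace ℂ (Fin k) →ₗ[ℂ] ℂ)))
      ≤ s.card := by
    refine le_trans (Submodule.finrank_le _) ?_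
    simp [Module.finrank_pi]
  have h3 : Module.finrank ℂ (EuclideanSpace ℂ (Fin k)) = k := by
    simp [finrank_euclideanSpace]
  rw [h3] at h
  unfold coordKer
  omega

lemma finrank_inf (V U : Submodule ℂ (EuclideanSpace ℂ (Fin k))) :
    Module.finrank ℂ V + Module.finrank ℂ U ≤ Module.finrank ℂ (V ⊓ U : Submodule ℂ _) + k := by
  have h := Submodule.finrank_sup_add_finrank_inf_eq V U
  have h2 : Module.finrank ℂ (V ⊔ U : Submodule ℂ _) ≤ k := by
    have := Submodule.finrank_le (V ⊔ U : Submodule ℂ (EuclideanSpace ℂ (Fin k)))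
    simpa [finrank_euclideanSpace] using this
  omega

lemma inner_T_eq {A A' : Matrix (Fin k) (Fin k) ℂ} {s : Finset (Fin k)}
    (hss : ∀ i j, i ∉ s → j ∉ s → A i j = A' i j)
    {v : EuclideanSpace ℂ (Fin k)} (hv : ∀ i ∈ s, v i = 0) :
    (inner ℂ v (Matrix.toEuclideanLin A v) : ℂ) = inner ℂ v (Matrix.toEuclideanLin A' v) := by
  rw [Matrix.toEuclideanLin_apply, Matrix.toEuclideanLin_apply]
  rw [PiLp.inner_apply, PiLp.inner_apply]
  refine Finset.sum_congr rfl fun i _ => ?_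
  by_cases his : i ∈ s
  · simp [hv i his]
  · have : (A *ᵥ (WithLp.equiv 2 (Fin k → ℂ)) v) i = (A' *ᵥ (WithLp.equiv 2 (Fin k → ℂ)) v) i := by
      simp only [Matrix.mulVec, dotProduct]
      refine Finset.sum_congr rfl fun j _ => ?_
      by_cases hjs : j ∈ s
      · have : ((WithLp.equiv 2 (Fin k → ℂ)) v) j = 0 := hv j hjs
        rw [this, mul_zero, mul_zero]
      · rw [hss i j his hjs]
    simp only [WithLp.equiv_apply, WithLp.ofLp_toLp] at this ⊢
    rw [this]


lemma evN_le {A A' : Matrix (Fin k) (Fin k) ℂ} (hA : A.IsHermitian) (hA' : A'.IsHermitian)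
    {s : Finset (Fin k)} (hss : ∀ i j, i ∉ s → j ∉ s → A i j = A' i j) (x : ℝ) :
    evN hA' x ≤ evN hA x + s.card := by
  by_contra hcon
  push_neg at hcon
  set tle : Finset (Fin k) := univ.filter (fun i => hA'.eigenvalues i ≤ x) with htle
  set tgt : Finset (Fin k) := univ.filter (fun i => x < hA.eigenvalues i) with htgt
  set V := Submodule.span ℂ (hA'.eigenvectorBasis '' ↑tle) with hV
  set U := Submodule.span ℂ (hA.eigenvectorBasis '' ↑tgt) with hU
  set K := coordKer s with hK
  have hVr : Module.finrank ℂ V = evN hA' x := finrank_span_eig hA' tle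
  have hUr : Module.finrank ℂ U = tgt.card := finrank_span_eig hA tgt
  have hcard : tgt.card + evN hA x = k := by
    have h := Finset.card_filter_add_card_filter_not
      (s := (univ : Finset (Fin k))) (p := fun i => hA.eigenvalues i ≤ x)
    have h2 : (univ.filter fun i => ¬ hA.eigenvalues i ≤ x) = tgt := by
      simp [htgt, not_le]
    rw [h2] at h
    simp only [card_univ, Fintype.card_fin] at h
    simpa [evN, add_comm] using h
  have hKr := coordKer_finrank (k := k) s
  rw [← hK] at hKr
  have hd1 := finrank_inf V U
  have hd2 := finrank_inf (V ⊓ U) K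
  have hW : Module.finrank ℂ (V ⊓ U ⊓ K : Submodule ℂ _) ≠ 0 := by omega
  have hne : (V ⊓ U ⊓ K : Submodule ℂ _) ≠ ⊥ := by
    intro h; rw [h] at hW; simp at hW
  obtain ⟨v, hvW, hv0⟩ := Submodule.ne_bot_iff _ |>.mp hne
  simp only [Submodule.mem_inf] at hvW
  obtain ⟨⟨hvV, hvU⟩, hvK⟩ := hvW
  have hq1 : (inner ℂ v (Matrix.toEuclideanLin A' v) : ℂ).re ≤ x * ‖v‖^2 := by
    rw [re_inner_T hA', norm_sq_repr hA', Finset.mul_sum]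
    refine Finset.sum_le_sum fun i _ => ?_
    by_cases hi : i ∈ tle
    · have hle : hA'.eigenvalues i ≤ x := by
        simp [htle] at hi; exact hi
      nlinarith [sq_nonneg ‖hA'.eigenvectorBasis.repr v i‖]
    · rw [repr_zero_of_span hA' hvV hi]; simp
  have hq2 : x * ‖v‖^2 < (inner ℂ v (Matrix.toEuclideanLin A v) : ℂ).re := by
    rw [re_inner_T hA, norm_sq_repr hA, Finset.mul_sum]
    refine Finset.sum_lt_sum ?_ ?_
    · intro i _
      by_cases hi : i ∈ tgt
      · have hlt : x < hA.eigenvalues i := by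
          simp [htgt] at hi; exact hi
        nlinarith [sq_nonneg ‖hA.eigenvectorBasis.repr v i‖]
      · rw [repr_zero_of_span hA hvU hi]; simp
    · have hv0' : hA.eigenvectorBasis.repr v ≠ 0 := fun h => hv0 (by
        simpa using (hA.eigenvectorBasis.repr).map_eq_zero_iff.mp h)
      have hrne : ∃ i, hA.eigenvectorBasis.repr v i ≠ 0 := by
        by_contra hall; push_neg at hall
        exact hv0' (by ext i; simpa using hall i)
      obtain ⟨i, hi⟩ := hrne
      refine ⟨i, Finset.mem_univ i, ?_⟩
      have hitgt : i ∈ tgt := by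
        by_contra h; exact hi (repr_zero_of_span hA hvU h)
      have hx : x < hA.eigenvalues i := by
        simp [htgt] at hitgt; exact hitgt
      have hn : 0 < ‖hA.eigenvectorBasis.repr v i‖^2 := pow_pos (norm_pos_iff.mpr hi) 2
      nlinarith
  have heq := inner_T_eq hss (fun i hi => (mem_coordKer).mp hvK i hi)
  rw [heq] at hq2
  linarith


lemma esd_eq {A : Matrix (Fin k) (Fin k) ℂ} (hA : A.IsHermitian) (x : ℝ) :
    esd hA x = (evN hA x : ℝ) / k := by
  simp [esd, evN]

lemma abs_esd_sub {A A' : Matrix (Fin k) (Fin k) ℂ} (hA : A.IsHermitian) (hA' : A'.IsHermitian)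
    {s : Finset (Fin k)} (hss : ∀ i j, i ∉ s → j ∉ s → A i j = A' i j) (x : ℝ) :
    |esd hA' x - esd hA x| ≤ (s.card : ℝ) / k := by
  have h1 := evN_le hA hA' hss x
  have h2 := evN_le hA' hA (fun i j hi hj => (hss i j hi hj).symm) x
  rw [esd_eq, esd_eq, div_sub_div_same, abs_div, abs_of_nonneg (by positivity : (0:ℝ) ≤ (k:ℝ))]
  have c1 : (evN hA' x : ℝ) ≤ (evN hA x : ℝ) + s.card := by exact_mod_cast h1
  have c2 : (evN hA x : ℝ) ≤ (evN hA' x : ℝ) + s.card := by exact_mod_cast h2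
  gcongr
  rw [abs_sub_le_iff]
  constructor <;> linarith

lemma esd_swap_lipschitz {n : ℕ} (hk0 : 0 < k) (M : Matrix (Fin n) (Fin n) ℂ)
    (hM : M.IsHermitian) (u : Fin k ↪ Fin n) (a b : Fin n) (x : ℝ) :
    |esd (hM.submatrix ⇑(u.trans (Equiv.swap a b).toEmbedding)) x
      - esd (hM.submatrix ⇑u) x| ≤ 2 / k := by
  set σ := Equiv.swap a b with hσ
  set s : Finset (Fin k) := univ.filter (fun i => σ (u i) ≠ u i) with hs
  have hss : ∀ i j, i ∉ s → j ∉ s →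
      (M.submatrix ⇑u ⇑u) i j = (M.submatrix ⇑(u.trans σ.toEmbedding) ⇑(u.trans σ.toEmbedding)) i j := by
    intro i j hi hj
    simp only [hs, mem_filter, mem_univ, true_and, not_not] at hi hj
    simp [Matrix.submatrix_apply, Function.Embedding.trans_apply, hi, hj]
  have hcard : s.card ≤ 2 := by
    have hmap : ∀ i ∈ s, u i ∈ ({a, b} : Finset (Fin n)) := by
      intro i hi
      simp only [hs, mem_filter, mem_univ, true_and] at hi
      by_contra hab
      simp only [mem_insert, mem_singleton, not_or] at hab
      exact hi (Equiv.swap_apply_of_ne_of_ne hab.1 hab.2)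
    have := Finset.card_le_card_of_injOn (fun i => u i) hmap (u.injective.injOn)
    refine this.trans ?_
    refine (Finset.card_insert_le _ _).trans ?_
    simp
  have h := abs_esd_sub (hM.submatrix ⇑u) (hM.submatrix ⇑(u.trans σ.toEmbedding)) hss x
  refine h.trans ?_
  have c1 : (s.card : ℝ) ≤ 2 := by exact_mod_cast hcard
  gcongr



lemma finset_mgf {β : Type} [Fintype β] [Nonempty β] (y : β → ℝ) (c θ : ℝ) (hc : 0 ≤ c)
    (hy : ∀ a b, |y a - y b| ≤ c) :
    ∑ a, Real.exp (θ * (y a - (∑ b, y b) / Fintype.card β))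
      ≤ (Fintype.card β) * Real.exp (θ^2 * c^2 / 2) := by
  have hcard : (0:ℝ) < Fintype.card β := by
    have := Fintype.card_pos (α := β); exact_mod_cast this
  set m : ℝ := (∑ b, y b) / Fintype.card β with hm
  have hsum0 : ∑ a, (y a - m) = 0 := by
    rw [Finset.sum_sub_distrib, Finset.sum_const, hm]
    simp only [Finset.card_univ, nsmul_eq_mul]
    field_simp
    ring
  have hdev : ∀ a, |y a - m| ≤ c := by
    intro a
    have h1 : y a - m = (∑ b, (y a - y b)) / Fintype.card β := by
      rw [Finset.sum_sub_distrib, Finset.sum_const, hm]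
      simp only [Finset.card_univ]
      field_simp
      ring
    rw [h1, abs_div, abs_of_pos hcard, div_le_iff₀ hcard]
    calc |∑ b, (y a - y b)| ≤ ∑ b, |y a - y b| := Finset.abs_sum_le_sum_abs _ _
      _ ≤ ∑ _b : β, c := Finset.sum_le_sum (fun b _ => hy a b)
      _ = c * Fintype.card β := by rw [Finset.sum_const]; simp [mul_comm]
  rcases eq_or_lt_of_le hc with hc0 | hcpos
  · have hz : ∀ a, y a - m = 0 := fun a =>
      abs_nonpos_iff.mp ((hdev a).trans (le_of_eq hc0.symm))
    calc ∑ a, Real.exp (θ * (y a - m)) = ∑ _a : β, 1 := by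
          refine Finset.sum_congr rfl fun a _ => ?_
          rw [hz a]; simp
      _ = (Fintype.card β : ℝ) := by simp
      _ ≤ _ := le_mul_of_one_le_right hcard.le (Real.one_le_exp (by positivity))
  · have h2c : (0:ℝ) < 2*c := by linarith
    have key : ∀ a, Real.exp (θ * (y a - m)) ≤
        ((c - (y a - m)) / (2*c)) * Real.exp (-(θ*c)) +
        ((c + (y a - m)) / (2*c)) * Real.exp (θ*c) := by
      intro a
      have hd := abs_le.mp (hdev a)
      have ha : 0 ≤ (c - (y a - m)) / (2*c) := div_nonneg (by linarith [hd.2]) h2c.le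
      have hb : 0 ≤ (c + (y a - m)) / (2*c) := div_nonneg (by linarith [hd.1]) h2c.le
      have hab : (c - (y a - m)) / (2*c) + (c + (y a - m)) / (2*c) = 1 := by
        field_simp; ring
      have hcex := convexOn_exp.2 (Set.mem_univ (-(θ*c))) (Set.mem_univ (θ*c)) ha hb hab
      simp only [smul_eq_mul] at hcex
      have harg : (c - (y a - m)) / (2*c) * (-(θ*c)) + (c + (y a - m)) / (2*c) * (θ*c)
          = θ * (y a - m) := by field_simp; ring
      rwa [harg] at hcex
    have hs1 : ∑ a, (c - (y a - m))/(2*c) = (Fintype.card β)/2 := by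
      rw [← Finset.sum_div, Finset.sum_sub_distrib, hsum0, Finset.sum_const]
      simp only [Finset.card_univ]
      field_simp
      ring
    have hs2 : ∑ a, (c + (y a - m))/(2*c) = (Fintype.card β)/2 := by
      rw [← Finset.sum_div, Finset.sum_add_distrib, hsum0, Finset.sum_const]
      simp only [Finset.card_univ]
      field_simp
      ring
    calc ∑ a, Real.exp (θ * (y a - m))
        ≤ ∑ a, (((c - (y a - m)) / (2*c)) * Real.exp (-(θ*c)) +
            ((c + (y a - m)) / (2*c)) * Real.exp (θ*c)) := Finset.sum_le_sum fun a _ => key a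
      _ = (Fintype.card β) * ((Real.exp (θ*c) + Real.exp (-(θ*c)))/2) := by
          rw [Finset.sum_add_distrib, ← Finset.sum_mul, ← Finset.sum_mul, hs1, hs2]
          ring
      _ ≤ (Fintype.card β) * Real.exp (θ^2 * c^2 / 2) := by
          have hch := Real.cosh_le_exp_half_sq (θ*c)
          rw [Real.cosh_eq] at hch
          have h3 : (θ*c)^2/2 = θ^2*c^2/2 := by ring
          rw [h3] at hch
          exact mul_le_mul_of_nonneg_left hch hcard.le


/-- precomposition equivalence on embeddings -/
def precompEquiv {ι γ β : Type} (e : ι ≃ γ) : (γ ↪ β) ≃ (ι ↪ β) where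
  toFun w := e.toEmbedding.trans w
  invFun u := e.symm.toEmbedding.trans u
  left_inv w := by ext a; simp
  right_inv u := by ext a; simp

lemma emb_mgf (k : ℕ) : ∀ (ι β : Type) [Fintype ι] [Fintype β] [DecidableEq β],
    Fintype.card ι = k → Nonempty (ι ↪ β) → ∀ (g : (ι ↪ β) → ℝ) (c θ : ℝ), 0 ≤ c →
    (∀ (u : ι ↪ β) (a b : β), |g (u.trans (Equiv.swap a b).toEmbedding) - g u| ≤ c) →
    ∑ u, Real.exp (θ * (g u - (∑ w, g w) / Fintype.card (ι ↪ β)))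
      ≤ (Fintype.card (ι ↪ β)) * Real.exp (k * (θ^2 * c^2 / 2)) := by
  induction k with
  | zero =>
      intro ι β _ _ _ hcard _ g c θ hc hg
      haveI : IsEmpty ι := Fintype.card_eq_zero_iff.mp hcard
      haveI : Unique (ι ↪ β) := inferInstance
      rw [Fintype.card_unique]
      simp
  | succ k ih =>
      intro ι β _ _ _ hcard hne g c θ hc hg
      -- transfer to `Option (Fin k)`
      have e : ι ≃ Option (Fin k) := Fintype.equivOfCardEq (by simp [hcard])
      set J : (Option (Fin k) ↪ β) ≃ (ι ↪ β) := precompEquiv e with hJ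
      set G : (Option (Fin k) ↪ β) → ℝ := fun w => g (J w) with hG
      have hsum : ∀ F : ℝ → ℝ, ∑ u : ι ↪ β, F (g u) = ∑ w, F (G w) :=
        fun F => (Equiv.sum_comp J (fun u => F (g u))).symm
      have hcardJ : Fintype.card (ι ↪ β) = Fintype.card (Option (Fin k) ↪ β) :=
        (Fintype.card_congr J).symm
      have hGswap : ∀ (w : Option (Fin k) ↪ β) (a b : β),
          |G (w.trans (Equiv.swap a b).toEmbedding) - G w| ≤ c := by
        intro w a b
        have hJw : J (w.trans (Equiv.swap a b).toEmbedding)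
            = (J w).trans (Equiv.swap a b).toEmbedding := by
          ext i; rfl
        rw [hG]
        simp only [hJw]
        exact hg (J w) a b
      have hne' : Nonempty (Option (Fin k) ↪ β) := ⟨J.symm (Classical.choice hne)⟩
      -- sigma decomposition
      set Eqv := Function.Embedding.optionEmbeddingEquiv (Fin k) β with hEqv
      set extE : ∀ f : Fin k ↪ β, ↥(Set.range ⇑f)ᶜ → (Option (Fin k) ↪ β) :=
        fun f a => Eqv.symm ⟨f, a⟩ with hextE
      have hdec : ∀ F : (Option (Fin k) ↪ β) → ℝ,
          ∑ w, F w = ∑ f : Fin k ↪ β, ∑ a : ↥(Set.range ⇑f)ᶜ, F (extE f a) := by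
        intro F
        rw [← Equiv.sum_comp Eqv.symm F, ← Finset.univ_sigma_univ, Finset.sum_sigma]
      set M : ℕ := Fintype.card β - k with hMdef
      have hkβ : k + 1 ≤ Fintype.card β := by
        have := Fintype.card_le_of_embedding (Classical.choice hne')
        simpa using this
      have hMC : ∀ f : Fin k ↪ β, Fintype.card ↥(Set.range ⇑f)ᶜ = M := by
        intro f
        rw [Fintype.card_compl_set]
        have : Fintype.card (Set.range ⇑f) = k := by
          rw [← Fintype.card_congr (Equiv.ofInjective ⇑f f.injective)]
          simp
        rw [this]
      have hMpos : 0 < M := by omega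
      set h : (Fin k ↪ β) → ℝ := fun f => (∑ a : ↥(Set.range ⇑f)ᶜ, G (extE f a)) / M with hh
      -- pair swap lemma
      have P1 : ∀ (f : Fin k ↪ β) (a b : ↥(Set.range ⇑f)ᶜ),
          extE f b = (extE f a).trans (Equiv.swap (↑a) (↑b)).toEmbedding := by
        intro f a b
        ext o
        cases o with
        | none =>
            show (↑b : β) = Equiv.swap (↑a) (↑b) ↑a
            rw [Equiv.swap_apply_left]
        | some i =>
            show f i = Equiv.swap (↑a) (↑b) (f i)
            rw [Equiv.swap_apply_of_ne_of_ne
              (fun hfa => a.2 ⟨i, hfa⟩) (fun hfb => b.2 ⟨i, hfb⟩)]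
      have hMreal : (0:ℝ) < (M : ℝ) := by exact_mod_cast hMpos
      -- h is swap-Lipschitz
      have hhswap : ∀ (f : Fin k ↪ β) (a₀ b₀ : β),
          |h (f.trans (Equiv.swap a₀ b₀).toEmbedding) - h f| ≤ c := by
        intro f a₀ b₀
        set σ := Equiv.swap a₀ b₀ with hσ
        have hrange : ∀ x : β, x ∈ (Set.range ⇑f)ᶜ ↔ σ x ∈ (Set.range ⇑(f.trans σ.toEmbedding))ᶜ := by
          intro x
          simp only [Set.mem_compl_iff, Set.mem_range, Function.Embedding.trans_apply,
            Equiv.coe_toEmbedding]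
          constructor
          · rintro hx ⟨i, hi⟩
            exact hx ⟨i, σ.injective hi⟩
          · rintro hx ⟨i, hi⟩
            exact hx ⟨i, by rw [hi]⟩
        set eC : ↥(Set.range ⇑f)ᶜ ≃ ↥(Set.range ⇑(f.trans σ.toEmbedding))ᶜ :=
          σ.subtypeEquiv hrange with heC
        have P3 : ∀ a : ↥(Set.range ⇑f)ᶜ,
            extE (f.trans σ.toEmbedding) (eC a) = (extE f a).trans σ.toEmbedding := by
          intro a
          ext o
          cases o <;> rfl
        have hre : ∑ a' : ↥(Set.range ⇑(f.trans σ.toEmbedding))ᶜ, G (extE (f.trans σ.toEmbedding) a')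
            = ∑ a : ↥(Set.range ⇑f)ᶜ, G ((extE f a).trans σ.toEmbedding) := by
          rw [← Equiv.sum_comp eC (fun a' => G (extE (f.trans σ.toEmbedding) a'))]
          exact Finset.sum_congr rfl fun a _ => by rw [P3 a]
        have hdiff : h (f.trans σ.toEmbedding) - h f
            = (∑ a : ↥(Set.range ⇑f)ᶜ, (G ((extE f a).trans σ.toEmbedding) - G (extE f a))) / M := by
          rw [hh]
          simp only
          rw [hre, div_sub_div_same, Finset.sum_sub_distrib]
        rw [hdiff, abs_div, abs_of_pos hMreal, div_le_iff₀ hMreal]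
        calc |∑ a : ↥(Set.range ⇑f)ᶜ, (G ((extE f a).trans σ.toEmbedding) - G (extE f a))|
            ≤ ∑ a : ↥(Set.range ⇑f)ᶜ, |G ((extE f a).trans σ.toEmbedding) - G (extE f a)| :=
              Finset.abs_sum_le_sum_abs _ _
          _ ≤ ∑ _a : ↥(Set.range ⇑f)ᶜ, c := Finset.sum_le_sum fun a _ => hGswap (extE f a) a₀ b₀
          _ = c * M := by rw [Finset.sum_const, Finset.card_univ, hMC f]; simp [mul_comm]
      -- cardinalities
      have hcardW : Fintype.card (Option (Fin k) ↪ β) = Fintype.card (Fin k ↪ β) * M := by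
        rw [Fintype.card_congr Eqv, Fintype.card_sigma]
        rw [Finset.sum_congr rfl (fun f _ => hMC f), Finset.sum_const]
        simp [mul_comm]
      haveI hneF : Nonempty (Fin k ↪ β) := ⟨(Eqv (Classical.choice hne')).1⟩
      have hcardF : (0:ℝ) < (Fintype.card (Fin k ↪ β) : ℝ) := by
        have := Fintype.card_pos (α := (Fin k ↪ β)); exact_mod_cast this
      have hGsum : ∑ w, G w = M * ∑ f, h f := by
        rw [hdec (fun w => G w), Finset.mul_sum]
        refine Finset.sum_congr rfl fun f _ => ?_
        rw [hh]
        simp only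
        rw [mul_div_cancel₀ _ (ne_of_gt hMreal)]
      set mW : ℝ := (∑ w, G w) / Fintype.card (Option (Fin k) ↪ β) with hmW
      have hmean : (∑ f, h f) / (Fintype.card (Fin k ↪ β) : ℝ) = mW := by
        rw [hmW, hGsum, hcardW]
        push_cast
        rw [mul_comm ((Fintype.card (Fin k ↪ β)):ℝ) (M:ℝ),
          mul_div_mul_left _ _ (ne_of_gt hMreal)]
      -- inner bound via finset_mgf
      have hinner : ∀ f : Fin k ↪ β, ∑ a : ↥(Set.range ⇑f)ᶜ, Real.exp (θ * (G (extE f a) - h f))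
          ≤ (M : ℝ) * Real.exp (θ^2 * c^2/2) := by
        intro f
        haveI : Nonempty ↥(Set.range ⇑f)ᶜ := by
          rw [← Fintype.card_pos_iff, hMC f]; exact hMpos
        have hpair : ∀ a b : ↥(Set.range ⇑f)ᶜ, |G (extE f a) - G (extE f b)| ≤ c := by
          intro a b
          rw [abs_sub_comm]
          have h2 := hGswap (extE f a) ↑a ↑b
          rw [← P1 f a b] at h2
          exact h2
        have hmf : h f = (∑ a, G (extE f a)) / (Fintype.card ↥(Set.range ⇑f)ᶜ : ℝ) := by
          rw [hh]
          simp only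
          rw [hMC f]
        have hfin := finset_mgf (fun a => G (extE f a)) c θ hc hpair
        rw [← hmf, hMC f] at hfin
        exact hfin
      -- IH for h
      have hIH := ih (Fin k) β (by simp) hneF h c θ hc hhswap
      rw [hmean] at hIH
      have hexpmul : Real.exp (θ^2*c^2/2) * Real.exp ((k:ℝ)*(θ^2*c^2/2))
          = Real.exp (((k:ℕ)+1 : ℝ)*(θ^2*c^2/2)) := by
        rw [← Real.exp_add]; congr 1; ring
      calc ∑ u : ι ↪ β, Real.exp (θ * (g u - (∑ w, g w)/Fintype.card (ι ↪ β)))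
          = ∑ w, Real.exp (θ * (G w - mW)) := by
            have hms : (∑ w : ι ↪ β, g w)/(Fintype.card (ι ↪ β) : ℝ) = mW := by
              rw [hmW, hcardJ]
              congr 1
              exact hsum id
            rw [hms]
            exact hsum (fun t => Real.exp (θ * (t - mW)))
        _ = ∑ f : Fin k ↪ β, ∑ a : ↥(Set.range ⇑f)ᶜ, Real.exp (θ * (G (extE f a) - mW)) :=
            hdec _
        _ = ∑ f : Fin k ↪ β, Real.exp (θ * (h f - mW)) *
              ∑ a : ↥(Set.range ⇑f)ᶜ, Real.exp (θ * (G (extE f a) - h f)) := by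
            refine Finset.sum_congr rfl fun f _ => ?_
            rw [Finset.mul_sum]
            refine Finset.sum_congr rfl fun a _ => ?_
            rw [← Real.exp_add]
            congr 1
            ring
        _ ≤ ∑ f : Fin k ↪ β, Real.exp (θ * (h f - mW)) * ((M:ℝ) * Real.exp (θ^2*c^2/2)) := by
            refine Finset.sum_le_sum fun f _ => ?_
            exact mul_le_mul_of_nonneg_left (hinner f) (Real.exp_nonneg _)
        _ = ((M:ℝ) * Real.exp (θ^2*c^2/2)) * ∑ f, Real.exp (θ * (h f - mW)) := by
            rw [← Finset.sum_mul]; ring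
        _ ≤ ((M:ℝ) * Real.exp (θ^2*c^2/2)) *
              ((Fintype.card (Fin k ↪ β) : ℝ) * Real.exp ((k:ℝ)*(θ^2*c^2/2))) := by
            refine mul_le_mul_of_nonneg_left hIH ?_
            positivity
        _ = (Fintype.card (ι ↪ β) : ℝ) * Real.exp (((k:ℕ)+1:ℝ) * (θ^2*c^2/2)) := by
            rw [hcardJ, hcardW, ← hexpmul]
            push_cast
            ring
        _ = (Fintype.card (ι ↪ β) : ℝ) * Real.exp ((((k+1):ℕ):ℝ) * (θ^2*c^2/2)) := by
            push_cast
            ring_nf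


lemma emb_tail {ι β : Type} [Fintype ι] [Fintype β] [DecidableEq β] {k : ℕ} (hcard : Fintype.card ι = k)
    (hne : Nonempty (ι ↪ β)) (g : (ι ↪ β) → ℝ) (c θ r : ℝ) (hc : 0 ≤ c) (hθ : 0 ≤ θ)
    (hg : ∀ (u : ι ↪ β) (a b : β), |g (u.trans (Equiv.swap a b).toEmbedding) - g u| ≤ c) :
    ((univ.filter fun u : ι ↪ β =>
        r ≤ g u - (∑ w, g w) / Fintype.card (ι ↪ β)).card : ℝ)
      ≤ (Fintype.card (ι ↪ β)) * Real.exp ((k:ℝ) * (θ^2 * c^2 / 2) - θ*r) := by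
  have hmgf := emb_mgf k ι β hcard hne g c θ hc hg
  set m := (∑ w, g w) / (Fintype.card (ι ↪ β) : ℝ) with hm
  have h1 : ((univ.filter fun u : ι ↪ β => r ≤ g u - m).card : ℝ) * Real.exp (θ*r)
      ≤ ∑ u, Real.exp (θ * (g u - m)) := by
    have h2 : ∑ _u ∈ univ.filter (fun u : ι ↪ β => r ≤ g u - m), Real.exp (θ*r)
        ≤ ∑ u ∈ univ.filter (fun u : ι ↪ β => r ≤ g u - m), Real.exp (θ*(g u - m)) := by
      refine Finset.sum_le_sum fun u hu => ?_
      exact Real.exp_le_exp.mpr (mul_le_mul_of_nonneg_left (Finset.mem_filter.mp hu).2 hθ)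
    have h3 : ∑ u ∈ univ.filter (fun u : ι ↪ β => r ≤ g u - m), Real.exp (θ*(g u - m))
        ≤ ∑ u, Real.exp (θ * (g u - m)) :=
      Finset.sum_le_sum_of_subset_of_nonneg (Finset.filter_subset _ _)
        (fun _ _ _ => Real.exp_nonneg _)
    calc ((univ.filter fun u : ι ↪ β => r ≤ g u - m).card : ℝ) * Real.exp (θ*r)
        = ∑ _u ∈ univ.filter (fun u : ι ↪ β => r ≤ g u - m), Real.exp (θ*r) := by
          rw [Finset.sum_const]; simp
      _ ≤ _ := h2.trans h3
  have h4 := h1.trans hmgf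
  rw [Real.exp_sub]
  rw [← le_div_iff₀ (Real.exp_pos (θ*r))] at h4
  convert h4 using 1
  exacts [rfl, by ring]

lemma emb_two_sided {ι β : Type} [Fintype ι] [Fintype β] [DecidableEq β] {k : ℕ} (hcard : Fintype.card ι = k)
    (hne : Nonempty (ι ↪ β)) (g : (ι ↪ β) → ℝ) (c θ r : ℝ) (hc : 0 ≤ c) (hθ : 0 ≤ θ)
    (hg : ∀ (u : ι ↪ β) (a b : β), |g (u.trans (Equiv.swap a b).toEmbedding) - g u| ≤ c) :
    ((univ.filter fun u : ι ↪ β =>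
        r ≤ |g u - (∑ w, g w) / Fintype.card (ι ↪ β)|).card : ℝ)
      ≤ 2 * (Fintype.card (ι ↪ β)) * Real.exp ((k:ℝ) * (θ^2 * c^2 / 2) - θ*r) := by
  set m := (∑ w, g w) / (Fintype.card (ι ↪ β) : ℝ) with hm
  have hsub : (univ.filter fun u : ι ↪ β => r ≤ |g u - m|)
      ⊆ (univ.filter fun u : ι ↪ β => r ≤ g u - m)
        ∪ (univ.filter fun u : ι ↪ β => r ≤ m - g u) := by
    intro u hu
    rw [Finset.mem_filter] at hu
    rcases abs_cases (g u - m) with ⟨habs, _⟩ | ⟨habs, _⟩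
    · exact Finset.mem_union_left _ (Finset.mem_filter.mpr ⟨Finset.mem_univ u, habs ▸ hu.2⟩)
    · refine Finset.mem_union_right _ (Finset.mem_filter.mpr ⟨Finset.mem_univ u, ?_⟩)
      have := hu.2
      rw [habs] at this
      linarith
  have hcard2 := Finset.card_le_card hsub
  have hcard3 := Finset.card_union_le
    (univ.filter fun u : ι ↪ β => r ≤ g u - m)
    (univ.filter fun u : ι ↪ β => r ≤ m - g u)
  have ht1 := emb_tail hcard hne g c θ r hc hθ hg
  have hg' : ∀ (u : ι ↪ β) (a b : β),
      |(fun w => -g w) (u.trans (Equiv.swap a b).toEmbedding) - (fun w => -g w) u| ≤ c := by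
    intro u a b
    simp only
    rw [show -g (u.trans (Equiv.swap a b).toEmbedding) - -g u
      = -(g (u.trans (Equiv.swap a b).toEmbedding) - g u) by ring, abs_neg]
    exact hg u a b
  have ht2 := emb_tail hcard hne (fun w => -g w) c θ r hc hθ hg'
  have hpred : (univ.filter fun u : ι ↪ β =>
      r ≤ (fun w => -g w) u - (∑ w, (fun w => -g w) w) / Fintype.card (ι ↪ β))
      = (univ.filter fun u : ι ↪ β => r ≤ m - g u) := by
    refine Finset.filter_congr fun u _ => ?_
    have he : -g u - (∑ w : ι ↪ β, -g w) / ((Fintype.card (ι ↪ β)):ℝ) = m - g u := by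
      rw [Finset.sum_neg_distrib, neg_div, hm]
      ring
    rw [he]
  rw [hpred] at ht2
  simp only [← hm] at ht1 ht2
  have hfin : ((univ.filter fun u : ι ↪ β => r ≤ |g u - m|).card : ℝ)
      ≤ ((univ.filter fun u : ι ↪ β => r ≤ g u - m).card : ℝ)
        + ((univ.filter fun u : ι ↪ β => r ≤ m - g u).card : ℝ) := by
    exact_mod_cast hcard2.trans hcard3
  linarith [ht1, ht2]


lemma exists_extend {γ δ : Type} [Fintype γ] [Fintype δ] (f g : γ ↪ δ) :
    ∃ σ : Equiv.Perm δ, ∀ a, σ (f a) = g a := by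
  have hcards : Fintype.card ↥(Set.range ⇑f)ᶜ = Fintype.card ↥(Set.range ⇑g)ᶜ := by
    rw [Fintype.card_compl_set, Fintype.card_compl_set,
      ← Fintype.card_congr (Equiv.ofInjective ⇑f f.injective),
      ← Fintype.card_congr (Equiv.ofInjective ⇑g g.injective)]
  refine ⟨(Equiv.sumCompl (· ∈ Set.range ⇑f)).symm.trans
    ((((Equiv.ofInjective ⇑f f.injective).symm.trans
        (Equiv.ofInjective ⇑g g.injective)).sumCongr
      (Fintype.equivOfCardEq hcards)).trans
      (Equiv.sumCompl (· ∈ Set.range ⇑g))), fun a => ?_⟩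
  simp only [Equiv.trans_apply]
  rw [Equiv.sumCompl_symm_apply_of_pos (p := (· ∈ Set.range ⇑f)) (a := f a) (Set.mem_range_self a)]
  show (Equiv.sumCompl (· ∈ Set.range ⇑g))
      (Sum.map (((Equiv.ofInjective ⇑f f.injective).symm.trans (Equiv.ofInjective ⇑g g.injective)))
        (Fintype.equivOfCardEq hcards) (Sum.inl ⟨f a, Set.mem_range_self a⟩)) = g a
  rw [Sum.map_inl, Equiv.sumCompl_apply_inl]
  have h1 : ((Equiv.ofInjective ⇑f f.injective).symm ⟨f a, Set.mem_range_self a⟩) = a := by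
    apply f.injective
    have := Equiv.apply_ofInjective_symm f.injective (⟨f a, Set.mem_range_self a⟩ : Set.range ⇑f)
    simp [this]
  rw [Equiv.trans_apply, h1]
  simp [Equiv.ofInjective_apply]


variable {n k : ℕ}

def Phi (hk : k ≤ n) (p : Equiv.Perm (Fin n)) : Fin k ↪ Fin n :=
  ⟨fun a => p (Fin.castLE hk a), fun a b hab => Fin.castLE_injective hk (p.injective hab)⟩

lemma fiber_card_eq (hk : k ≤ n) (u : Fin k ↪ Fin n) :
    (univ.filter fun p : Equiv.Perm (Fin n) => Phi hk p = u).card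
      = (univ.filter fun p : Equiv.Perm (Fin n) => Phi hk p = Phi hk 1).card := by
  obtain ⟨σ, hσ⟩ := exists_extend (Phi hk 1) u
  refine Finset.card_nbij' (fun p => σ⁻¹ * p) (fun q => σ * q) ?_ ?_ ?_ ?_
  · intro p hp
    rw [mem_coe, mem_filter] at hp ⊢
    refine ⟨mem_univ _, ?_⟩
    refine Function.Embedding.ext fun a => ?_
    show σ⁻¹ (p (Fin.castLE hk a)) = Fin.castLE hk a
    have h2 : p (Fin.castLE hk a) = u a := DFunLike.congr_fun hp.2 a
    rw [h2, ← hσ a]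
    exact σ.symm_apply_apply _
  · intro q hq
    rw [mem_coe, mem_filter] at hq ⊢
    refine ⟨mem_univ _, ?_⟩
    refine Function.Embedding.ext fun a => ?_
    show σ (q (Fin.castLE hk a)) = u a
    have h2 : q (Fin.castLE hk a) = Phi hk 1 a := DFunLike.congr_fun hq.2 a
    rw [h2, hσ a]
  · intro p _; group
  · intro q _; group

lemma transfer (hk : k ≤ n) (F : (Fin k ↪ Fin n) → ℝ) :
    ∑ p : Equiv.Perm (Fin n), F (Phi hk p)
      = ((univ.filter fun p : Equiv.Perm (Fin n) => Phi hk p = Phi hk 1).card : ℝ) * ∑ u, F u := by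
  rw [← Finset.sum_fiberwise_of_maps_to (g := Phi hk)
    (fun p _ => mem_univ (Phi hk p)) (fun p => F (Phi hk p))]
  rw [Finset.mul_sum]
  refine Finset.sum_congr rfl fun u _ => ?_
  calc ∑ p ∈ univ.filter (fun p => Phi hk p = u), F (Phi hk p)
      = ∑ p ∈ univ.filter (fun p => Phi hk p = u), F u :=
        Finset.sum_congr rfl fun p hp => by rw [(mem_filter.mp hp).2]
    _ = ((univ.filter (fun p => Phi hk p = u)).card : ℝ) * F u := by
        rw [Finset.sum_const, nsmul_eq_mul]
    _ = _ := by rw [fiber_card_eq hk u]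

lemma fiber_pos (hk : k ≤ n) :
    0 < (univ.filter fun p : Equiv.Perm (Fin n) => Phi hk p = Phi hk 1).card :=
  Finset.card_pos.mpr ⟨1, mem_filter.mpr ⟨mem_univ _, rfl⟩⟩

end ESDAux
end ESDAuxSection

/-- Pointwise concentration of the ESD of a random principal submatrix:
`P(|F_A(x) - F(x)| ≥ r) ≤ 6 exp(-r √k / √8)`. -/
theorem esd_pointwise_concentration {n k : ℕ} (hk0 : 0 < k) (hk : k ≤ n)
    (M : Matrix (Fin n) (Fin n) ℂ) (hM : M.IsHermitian) (x r : ℝ) (hr : 0 ≤ r) :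
    ((Finset.univ.filter fun p : Equiv.Perm (Fin n) =>
        r ≤ |fESD hk M hM p x - meanESD hk M hM x|).card : ℝ) /
        Fintype.card (Equiv.Perm (Fin n)) ≤
      6 * Real.exp (-(r * Real.sqrt k) / Real.sqrt 8) := by
  classical
  set g : (Fin k ↪ Fin n) → ℝ := fun u => esd (hM.submatrix ⇑u) x with hgdef
  have hfg : ∀ p : Equiv.Perm (Fin n), fESD hk M hM p x = g (ESDAux.Phi hk p) := fun p => rfl
  set m : ℕ := (univ.filter fun p : Equiv.Perm (Fin n) =>
    ESDAux.Phi hk p = ESDAux.Phi hk 1).card with hmdef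
  have hmpos : 0 < m := ESDAux.fiber_pos hk
  have hmR : (0:ℝ) < (m:ℝ) := by exact_mod_cast hmpos
  haveI hne : Nonempty (Fin k ↪ Fin n) := ⟨ESDAux.Phi hk 1⟩
  have hcEpos : (0:ℝ) < (Fintype.card (Fin k ↪ Fin n) : ℝ) := by
    have := Fintype.card_pos (α := Fin k ↪ Fin n); exact_mod_cast this
  have hcardPerm : ((Fintype.card (Equiv.Perm (Fin n)) : ℝ))
      = (m:ℝ) * (Fintype.card (Fin k ↪ Fin n) : ℝ) := by
    have h := ESDAux.transfer hk (fun _ => (1:ℝ))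
    simpa [hmdef] using h
  set mE : ℝ := (∑ u, g u) / (Fintype.card (Fin k ↪ Fin n) : ℝ) with hmE
  have hmean : meanESD hk M hM x = mE := by
    unfold meanESD
    have h1 : ∑ p : Equiv.Perm (Fin n), fESD hk M hM p x = (m:ℝ) * ∑ u, g u := by
      have h2 := ESDAux.transfer hk g
      rw [← hmdef] at h2
      calc ∑ p : Equiv.Perm (Fin n), fESD hk M hM p x
          = ∑ p : Equiv.Perm (Fin n), g (ESDAux.Phi hk p) :=
            Finset.sum_congr rfl fun p _ => hfg p
        _ = (m:ℝ) * ∑ u, g u := h2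
    rw [h1, hcardPerm, hmE, mul_div_mul_left _ _ (ne_of_gt hmR)]
  have hev : ((Finset.univ.filter fun p : Equiv.Perm (Fin n) =>
        r ≤ |fESD hk M hM p x - meanESD hk M hM x|).card : ℝ)
      = (m:ℝ) * ((univ.filter fun u : Fin k ↪ Fin n => r ≤ |g u - mE|).card : ℝ) := by
    have htr := ESDAux.transfer hk (fun u => if r ≤ |g u - mE| then (1:ℝ) else 0)
    rw [← hmdef] at htr
    have hL : ∑ p : Equiv.Perm (Fin n), (if r ≤ |g (ESDAux.Phi hk p) - mE| then (1:ℝ) else 0)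
        = ((Finset.univ.filter fun p : Equiv.Perm (Fin n) =>
            r ≤ |fESD hk M hM p x - meanESD hk M hM x|).card : ℝ) := by
      rw [Finset.sum_boole]
      congr 2
      apply Finset.filter_congr
      intro p _
      rw [hfg p, hmean]
    have hR : ∑ u : Fin k ↪ Fin n, (if r ≤ |g u - mE| then (1:ℝ) else 0)
        = ((univ.filter fun u : Fin k ↪ Fin n => r ≤ |g u - mE|).card : ℝ) := by
      rw [Finset.sum_boole]
    rw [← hL, ← hR]
    exact htr
  set c : ℝ := 2 / (k:ℝ) with hcdef
  set θ : ℝ := Real.sqrt k / Real.sqrt 8 with hθdef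
  have hθpos : 0 ≤ θ := by positivity
  have hcpos : 0 ≤ c := by positivity
  have hswap : ∀ (u : Fin k ↪ Fin n) (a b : Fin n),
      |g (u.trans (Equiv.swap a b).toEmbedding) - g u| ≤ c := fun u a b =>
    ESDAux.esd_swap_lipschitz hk0 M hM u a b x
  have htwo := ESDAux.emb_two_sided (by simp : Fintype.card (Fin k) = k) hne g c θ r hcpos
    hθpos hswap
  simp only [← hmE] at htwo
  have hkR : (0:ℝ) < (k:ℝ) := by exact_mod_cast hk0
  have hθsq : θ^2 = (k:ℝ)/8 := by
    rw [hθdef, div_pow, Real.sq_sqrt (le_of_lt hkR), Real.sq_sqrt (by norm_num : (0:ℝ) ≤ 8)]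
  have harith : (k:ℝ) * (θ^2 * c^2/2) = 1/4 := by
    rw [hθsq, hcdef]
    field_simp
    ring
  rw [harith] at htwo
  rw [hev, hcardPerm, mul_div_mul_left _ _ (ne_of_gt hmR)]
  have hstep : ((univ.filter fun u : Fin k ↪ Fin n => r ≤ |g u - mE|).card : ℝ)
      / (Fintype.card (Fin k ↪ Fin n) : ℝ) ≤ 2 * Real.exp (1/4 - θ*r) := by
    rw [div_le_iff₀ hcEpos]
    calc ((univ.filter fun u : Fin k ↪ Fin n => r ≤ |g u - mE|).card : ℝ)
        ≤ 2 * (Fintype.card (Fin k ↪ Fin n) : ℝ) * Real.exp (1/4 - θ*r) := htwo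
      _ = 2 * Real.exp (1/4 - θ*r) * (Fintype.card (Fin k ↪ Fin n) : ℝ) := by ring
  refine hstep.trans ?_
  have he14 : Real.exp (1/4 : ℝ) ≤ 3 := by
    have h1 : Real.exp (1/4 : ℝ) ≤ Real.exp 1 := Real.exp_le_exp.mpr (by norm_num)
    have h2 := Real.exp_one_lt_d9
    linarith
  have hexp : Real.exp (1/4 - θ*r) = Real.exp (1/4) * Real.exp (-(θ*r)) := by
    rw [← Real.exp_add]
    ring_nf
  calc 2 * Real.exp (1/4 - θ*r) = 2 * Real.exp (1/4) * Real.exp (-(θ*r)) := by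
        rw [hexp]; ring
    _ ≤ 6 * Real.exp (-(θ*r)) := by
        nlinarith [Real.exp_pos (-(θ*r)), he14]
    _ = 6 * Real.exp (-(r * Real.sqrt k) / Real.sqrt 8) := by
        rw [show -(θ*r) = -(r * Real.sqrt k) / Real.sqrt 8 by rw [hθdef]; ring]
end
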